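/- arXiv:2305.18268 — 4 statements merged into one kernel-verified Lean document; each statement's English description precedes it below -/
import Mathlib

section
/- If P and Q are irreducible transition matrices reversible with respect to π, have identical eigenvalues counting multiplicity, and P ≠ Q, then neither efficiency-dominates the other. -/
open Matrix BigOperators Filter

def IsStochastic {n : ℕ} (P : Matrix (Fin n) (Fin n) ℝ) : Prop :=
  (∀ x y, 0 ≤ P x y) ∧ ∀ x, ∑ y, P x y = 1

def IsReversible {n : ℕ} (π : Fin n → ℝ) (P : Matrix (Fin n) (Fin n) ℝ) : Prop :=
  ∀ x y, π x * P x y = π y * P y x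

def MatIrreducible {n : ℕ} (P : Matrix (Fin n) (Fin n) ℝ) : Prop :=
  ∀ x y, ∃ k : ℕ, 0 < (P ^ k) x y

noncomputable def pInner {n : ℕ} (π f g : Fin n → ℝ) : ℝ := ∑ x, f x * g x * π x

noncomputable def autocov {n : ℕ} (π : Fin n → ℝ) (P : Matrix (Fin n) (Fin n) ℝ)
    (f : Fin n → ℝ) (k : ℕ) : ℝ :=
  ∑ x, ∑ y, π x * (f x - ∑ z, π z * f z) * (P ^ k) x y * (f y - ∑ z, π z * f z)

noncomputable def varN {n : ℕ} (π : Fin n → ℝ) (P : Matrix (Fin n) (Fin n) ℝ)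
    (f : Fin n → ℝ) (N : ℕ) : ℝ :=
  ((N : ℝ))⁻¹ * ∑ i ∈ Finset.range N, ∑ j ∈ Finset.range N,
    autocov π P f (max i j - min i j)

def HasAsymptVar {n : ℕ} (π : Fin n → ℝ) (P : Matrix (Fin n) (Fin n) ℝ)
    (f : Fin n → ℝ) (v : ℝ) : Prop :=
  Tendsto (varN π P f) atTop (nhds v)

def EffDom {n : ℕ} (π : Fin n → ℝ) (P Q : Matrix (Fin n) (Fin n) ℝ) : Prop :=
  ∀ (f : Fin n → ℝ) (vP vQ : ℝ),
    HasAsymptVar π P f vP → HasAsymptVar π Q f vQ → vP ≤ vQ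

set_option linter.dupNamespace false in
section
open Finset
namespace SD

variable {n : ℕ}

lemma pInner_comm (π f g : Fin n → ℝ) : pInner π f g = pInner π g f :=
  Finset.sum_congr rfl fun x _ => by ring

lemma mulVec_apply (P : Matrix (Fin n) (Fin n) ℝ) (f : Fin n → ℝ) (x : Fin n) :
    P.mulVec f x = ∑ y, P x y * f y := rfl

-- completeness relation
lemma completeness (π : Fin n → ℝ) (v : Fin n → Fin n → ℝ)
    (hor : ∀ i j, pInner π (v i) (v j) = if i = j then 1 else 0) (x y : Fin n) :
    (∑ i, v i x * v i y) * π y = if x = y then 1 else 0 := by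
  classical
  set A : Matrix (Fin n) (Fin n) ℝ := fun i z => v i z * π z with hA
  set B : Matrix (Fin n) (Fin n) ℝ := fun z i => v i z with hB
  have hAB : A * B = 1 := by
    ext i j
    rw [Matrix.mul_apply]; simp only [hA, hB, Matrix.one_apply]
    have h := hor i j
    simp only [pInner] at h
    rw [← h]
    exact Finset.sum_congr rfl fun z _ => by ring
  have hBA : B * A = 1 := mul_eq_one_comm.mp hAB
  have := congrFun (congrFun hBA x) y
  simp only [Matrix.mul_apply, hA, hB, Matrix.one_apply] at this
  rw [← this, Finset.sum_mul]
  exact Finset.sum_congr rfl fun i _ => by ring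

-- expansion in orthonormal basis
lemma expansion (π : Fin n → ℝ) (v : Fin n → Fin n → ℝ)
    (hor : ∀ i j, pInner π (v i) (v j) = if i = j then 1 else 0) (f : Fin n → ℝ) (x : Fin n) :
    f x = ∑ i, pInner π f (v i) * v i x := by
  classical
  have : ∑ i, pInner π f (v i) * v i x = ∑ y, f y * ((∑ i, v i x * v i y) * π y) := by
    simp only [pInner, Finset.sum_mul, Finset.mul_sum]
    rw [Finset.sum_comm]
    exact Finset.sum_congr rfl fun y _ => Finset.sum_congr rfl fun i _ => by ring
  rw [this]
  simp only [fun y => completeness π v hor x y]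
  simp

-- pInner of a function given as sum of basis (left slot)
lemma pinner_sum_left (π : Fin n → ℝ) (w : Fin n → ℝ) (u : Fin n → Fin n → ℝ) (g : Fin n → ℝ) :
    pInner π (fun x => ∑ i, w i * u i x) g = ∑ i, w i * pInner π (u i) g := by
  simp only [pInner, Finset.sum_mul, Finset.mul_sum]
  rw [Finset.sum_comm]
  exact Finset.sum_congr rfl fun i _ => Finset.sum_congr rfl fun x _ => by ring

lemma pinner_sum_right (π : Fin n → ℝ) (w : Fin n → ℝ) (u : Fin n → Fin n → ℝ) (g : Fin n → ℝ) :
    pInner π g (fun x => ∑ i, w i * u i x) = ∑ i, w i * pInner π g (u i) := by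
  rw [pInner_comm]
  rw [pinner_sum_left]
  exact Finset.sum_congr rfl fun i _ => by rw [pInner_comm]

-- Parseval
lemma parseval (π : Fin n → ℝ) (v : Fin n → Fin n → ℝ)
    (hor : ∀ i j, pInner π (v i) (v j) = if i = j then 1 else 0) (f : Fin n → ℝ) :
    pInner π f f = ∑ i, (pInner π f (v i))^2 := by
  classical
  have h1 : pInner π f f = pInner π (fun x => ∑ i, pInner π f (v i) * v i x) f := by
    congr 1
    funext x
    exact expansion π v hor f x
  rw [h1, pinner_sum_left]
  exact Finset.sum_congr rfl fun i _ => by rw [pInner_comm π (v i) f]; ring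

-- entries of powers of a stochastic matrix are nonneg
lemma pow_nonneg {P : Matrix (Fin n) (Fin n) ℝ} (hP : IsStochastic P) (k : ℕ) :
    ∀ x y, 0 ≤ (P ^ k) x y := by
  induction k with
  | zero => intro x y; by_cases h : x = y <;> simp [Matrix.one_apply, h]
  | succ k ih =>
      intro x y
      rw [pow_succ, Matrix.mul_apply]
      exact Finset.sum_nonneg fun z _ => mul_nonneg (ih x z) (hP.1 z y)

-- Perron: eigenfunctions for eigenvalue 1 are constant
lemma perron {P : Matrix (Fin n) (Fin n) ℝ} (hP : IsStochastic P) (hirr : MatIrreducible P)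
    (f : Fin n → ℝ) (hf : P.mulVec f = f) (x y : Fin n) : f x = f y := by
  classical
  rcases Nat.eq_zero_or_pos n with hn | hn
  · exact absurd x.2 (by omega)
  obtain ⟨x0, -, hx0⟩ := Finset.exists_max_image Finset.univ f ⟨x, Finset.mem_univ x⟩
  have hx0' : ∀ z, f z ≤ f x0 := fun z => hx0 z (Finset.mem_univ z)
  have step : ∀ z, f z = f x0 → ∀ w, 0 < P z w → f w = f x0 := by
    intro z hz w hw
    have h1 : ∑ w, P z w * f w = f x0 := by
      have := congrFun hf z
      rw [mulVec_apply] at this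
      rw [this, hz]
    have h2 : ∑ w, P z w * (f x0 - f w) = 0 := by
      have hrow := hP.2 z
      have : ∑ w, P z w * (f x0 - f w) = (∑ w, P z w) * f x0 - ∑ w, P z w * f w := by
        rw [Finset.sum_mul, ← Finset.sum_sub_distrib]
        exact Finset.sum_congr rfl fun w _ => by ring
      rw [this, hrow, h1]; ring
    have h3 := (Finset.sum_eq_zero_iff_of_nonneg
      (fun w _ => mul_nonneg (hP.1 z w) (by linarith [hx0' w]))).mp h2 w (Finset.mem_univ w)
    rcases mul_eq_zero.mp h3 with h | h
    · exact absurd h (ne_of_gt hw)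
    · linarith
  have main : ∀ k z, 0 < (P ^ k) x0 z → f z = f x0 := by
    intro k
    induction k with
    | zero =>
        intro z hz
        simp only [pow_zero, Matrix.one_apply] at hz
        by_cases h : x0 = z
        · rw [h]
        · simp [h] at hz
    | succ k ih =>
        intro z hz
        rw [pow_succ, Matrix.mul_apply] at hz
        obtain ⟨w, -, hw⟩ := Finset.exists_lt_of_sum_lt (f := fun _ => (0:ℝ)) (by simpa using hz)
        have hw1 : 0 < (P ^ k) x0 w := by
          rcases lt_or_eq_of_le (pow_nonneg hP k x0 w) with h | h
          · exact h
          · rw [← h] at hw; simp at hw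
        have hw2 : 0 < P w z := by
          rcases lt_or_eq_of_le (hP.1 w z) with h | h
          · exact h
          · rw [← h] at hw; simp at hw
        exact step w (ih w hw1) z hw2
  obtain ⟨k1, hk1⟩ := hirr x0 x
  obtain ⟨k2, hk2⟩ := hirr x0 y
  rw [main k1 x hk1, main k2 y hk2]


noncomputable def Ufun (l : ℝ) (N : ℕ) : ℝ :=
  ∑ i ∈ range N, ∑ j ∈ range N, l ^ (max i j - min i j)

lemma double_sum_succ (F : ℕ → ℕ → ℝ) (N : ℕ) :
    ∑ i ∈ range (N+1), ∑ j ∈ range (N+1), F i j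
    = ((∑ i ∈ range N, ∑ j ∈ range N, F i j) + ∑ j ∈ range N, F N j)
      + (∑ i ∈ range N, F i N + F N N) := by
  rw [Finset.sum_range_succ (f := fun i => ∑ j ∈ range (N+1), F i j)]
  rw [Finset.sum_range_succ (f := fun j => F N j)]
  simp only [Finset.sum_range_succ (f := fun j => F _ j)]
  rw [Finset.sum_add_distrib]
  ring

lemma Ufun_formula (l : ℝ) (N : ℕ) :
    Ufun l N = N + 2 * ∑ m ∈ range N, (∑ k ∈ range m, l ^ (k + 1)) := by
  induction N with
  | zero => simp [Ufun]
  | succ N ih =>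
      have refl1 : ∀ g : ℕ → ℝ, (∑ j ∈ range N, g j) = ∑ j ∈ range N, g (N - 1 - j) :=
        fun g => (Finset.sum_range_reflect g N).symm
      have e1 : ∑ j ∈ range N, l ^ (max N j - min N j) = ∑ k ∈ range N, l ^ (k + 1) := by
        rw [refl1 (fun k => l ^ (k + 1))]
        refine Finset.sum_congr rfl fun j hj => ?_
        have hj' := Finset.mem_range.mp hj
        have h1 : max N j = N := max_eq_left (le_of_lt hj')
        have h2 : min N j = j := min_eq_right (le_of_lt hj')
        rw [h1, h2]
        congr 1
        omega
      have e2 : ∑ i ∈ range N, l ^ (max i N - min i N) = ∑ k ∈ range N, l ^ (k + 1) := by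
        rw [refl1 (fun k => l ^ (k + 1))]
        refine Finset.sum_congr rfl fun j hj => ?_
        have hj' := Finset.mem_range.mp hj
        have h1 : max j N = N := max_eq_right (le_of_lt hj')
        have h2 : min j N = j := min_eq_left (le_of_lt hj')
        rw [h1, h2]
        congr 1
        omega
      have := double_sum_succ (fun i j => l ^ (max i j - min i j)) N
      rw [Ufun, this, e1, e2, ← Ufun, ih, Finset.sum_range_succ]
      simp only [max_self, min_self, Nat.sub_self, pow_zero, Nat.cast_succ]
      ring

lemma Ufun_tendsto {l : ℝ} (h1 : -1 ≤ l) (h2 : l < 1) :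
    Tendsto (fun N : ℕ => (N : ℝ)⁻¹ * Ufun l N) atTop (nhds ((1 + l) / (1 - l))) := by
  have hne : l - 1 ≠ 0 := by linarith
  have hne' : l ≠ 1 := by linarith
  -- closed form for the inner partial sums
  have hA : ∀ m : ℕ, (∑ k ∈ range m, l ^ (k + 1)) = l / (l - 1) * (l ^ m - 1) := by
    intro m
    have : (∑ k ∈ range m, l ^ (k + 1)) = l * ∑ k ∈ range m, l ^ k := by
      rw [Finset.mul_sum]
      exact Finset.sum_congr rfl fun k _ => by ring
    rw [this, geom_sum_eq hne']
    field_simp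
  set c := l / (l - 1) with hc
  have hS : ∀ N : ℕ, (∑ m ∈ range N, ∑ k ∈ range m, l ^ (k + 1))
      = c * ((l ^ N - 1) / (l - 1)) - N * c := by
    intro N
    induction N with
    | zero => simp
    | succ N ih =>
        rw [Finset.sum_range_succ, ih, hA, pow_succ, Nat.cast_succ]
        field_simp
        ring
  have h10 : (1:ℝ) - l ≠ 0 := by linarith
  have key : (fun N : ℕ => (N : ℝ)⁻¹ * Ufun l N) =ᶠ[atTop]
      (fun N : ℕ => 1 - 2 * c + (2 * c / (l - 1)) * ((l ^ N - 1) * (N : ℝ)⁻¹)) := by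
    filter_upwards [Filter.eventually_ge_atTop 1] with N hN
    have hN0 : (N : ℝ) ≠ 0 := Nat.cast_ne_zero.mpr (by omega)
    rw [Ufun_formula, hS]
    field_simp
    ring
  have hnull : Tendsto (fun N : ℕ => (l ^ N - 1) * (N : ℝ)⁻¹) atTop (nhds 0) := by
    have hb : Tendsto (fun N : ℕ => 2 * (N : ℝ)⁻¹) atTop (nhds 0) := by
      have := tendsto_inv_atTop_nhds_zero_nat.const_mul (2 : ℝ)
      simpa using this
    refine squeeze_zero_norm ?_ hb
    · intro N
      rw [norm_mul]
      have h1 : ‖l ^ N - 1‖ ≤ 2 := by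
        rw [Real.norm_eq_abs]
        have : |l ^ N| ≤ 1 := by
          rw [abs_pow]
          exact pow_le_one₀ (abs_nonneg l) (abs_le.mpr ⟨h1, le_of_lt h2⟩)
        have := abs_sub_abs_le_abs_sub (l ^ N) 1
        have h3 := abs_sub (l ^ N) 1
        calc |l ^ N - 1| ≤ |l ^ N| + |1| := abs_sub _ _
          _ ≤ 2 := by rw [abs_one]; linarith
      have h2 : ‖(N : ℝ)⁻¹‖ = (N : ℝ)⁻¹ := by
        rw [Real.norm_eq_abs, abs_of_nonneg (by positivity)]
      rw [h2]
      exact mul_le_mul_of_nonneg_right h1 (by positivity)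
  have hG : Tendsto (fun N : ℕ => 1 - 2 * c + (2 * c / (l - 1)) * ((l ^ N - 1) * (N : ℝ)⁻¹))
      atTop (nhds (1 - 2 * c + (2 * c / (l - 1)) * 0)) :=
    tendsto_const_nhds.add (hnull.const_mul _)
  have hval : 1 - 2 * c + (2 * c / (l - 1)) * 0 = (1 + l) / (1 - l) := by
    rw [hc]
    field_simp
    ring
  rw [← hval]
  exact hG.congr' key.symm


variable {n : ℕ}

lemma rev_symm {π : Fin n → ℝ} {P : Matrix (Fin n) (Fin n) ℝ} (hrev : IsReversible π P)
    (f g : Fin n → ℝ) : pInner π (P.mulVec f) g = pInner π f (P.mulVec g) := by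
  simp only [pInner, mulVec_apply, Finset.sum_mul, Finset.mul_sum]
  rw [Finset.sum_comm]
  refine Finset.sum_congr rfl fun x _ => Finset.sum_congr rfl fun y _ => ?_
  linear_combination (f x * g y) * hrev y x

lemma pinner_smul_right (π g w : Fin n → ℝ) (c : ℝ) :
    pInner π g (c • w) = c * pInner π g w := by
  simp only [pInner, Pi.smul_apply, smul_eq_mul, Finset.mul_sum]
  exact Finset.sum_congr rfl fun x _ => by ring

-- Jensen / contraction
lemma pinner_mulVec_le {π : Fin n → ℝ} {P : Matrix (Fin n) (Fin n) ℝ}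
    (hπpos : ∀ x, 0 < π x) (hP : IsStochastic P) (hrev : IsReversible π P) (f : Fin n → ℝ) :
    pInner π (P.mulVec f) (P.mulVec f) ≤ pInner π f f := by
  have step1 : ∀ x, (P.mulVec f x) ^ 2 ≤ ∑ y, P x y * f y ^ 2 := by
    intro x
    rw [mulVec_apply]
    have := Finset.sum_sq_le_sum_mul_sum_of_sq_eq_mul Finset.univ
      (f := fun y => P x y) (g := fun y => P x y * f y ^ 2) (r := fun y => P x y * f y)
      (fun y _ => hP.1 x y) (fun y _ => mul_nonneg (hP.1 x y) (sq_nonneg _))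
      (fun y _ => by ring)
    rw [hP.2 x, one_mul] at this
    exact this
  have step2 : pInner π (P.mulVec f) (P.mulVec f) ≤ ∑ x, (∑ y, P x y * f y ^ 2) * π x := by
    refine Finset.sum_le_sum fun x _ => ?_
    have h := step1 x
    have hπ := (hπpos x).le
    calc P.mulVec f x * P.mulVec f x * π x = (P.mulVec f x) ^ 2 * π x := by ring
      _ ≤ (∑ y, P x y * f y ^ 2) * π x := mul_le_mul_of_nonneg_right h hπ
  refine le_trans step2 (le_of_eq ?_)
  simp only [Finset.sum_mul, pInner]
  rw [Finset.sum_comm]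
  refine Finset.sum_congr rfl fun y _ => ?_
  have : ∑ x, P x y * f y ^ 2 * π x = f y ^ 2 * ∑ x, π x * P x y := by
    rw [Finset.mul_sum]
    exact Finset.sum_congr rfl fun x _ => by ring
  rw [this]
  have hcol : ∑ x, π x * P x y = π y := by
    have : ∑ x, π x * P x y = ∑ x, π y * P y x :=
      Finset.sum_congr rfl fun x _ => hrev x y
    rw [this, ← Finset.mul_sum, hP.2 y, mul_one]
  rw [hcol]
  ring

lemma eig_sq_le_one {π : Fin n → ℝ} {P : Matrix (Fin n) (Fin n) ℝ}
    (hπpos : ∀ x, 0 < π x) (hP : IsStochastic P) (hrev : IsReversible π P)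
    (v : Fin n → ℝ) (l : ℝ) (hv : P.mulVec v = l • v) (hnorm : pInner π v v = 1) :
    l ^ 2 ≤ 1 := by
  have := pinner_mulVec_le hπpos hP hrev v
  rw [hv] at this
  have h2 : pInner π (l • v) (l • v) = l ^ 2 * pInner π v v := by
    simp only [pInner, Pi.smul_apply, smul_eq_mul]
    rw [Finset.mul_sum]
    exact Finset.sum_congr rfl fun x _ => by ring
  rw [h2, hnorm] at this
  linarith [this]

-- existence of eigenvalue 1
lemma exists_eig_one {π : Fin n → ℝ} {P : Matrix (Fin n) (Fin n) ℝ} (hn : 0 < n)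
    (hP : IsStochastic P) (hrev : IsReversible π P)
    (v : Fin n → Fin n → ℝ) (lam : Fin n → ℝ)
    (hor : ∀ i j, pInner π (v i) (v j) = if i = j then 1 else 0)
    (heig : ∀ i, P.mulVec (v i) = lam i • v i) :
    ∃ i0, lam i0 = 1 := by
  by_contra hcon
  push_neg at hcon
  set u : Fin n → ℝ := fun _ => 1 with hu
  have hPu : P.mulVec u = u := by
    funext x
    rw [mulVec_apply]
    simp [hu, hP.2 x]
  have hzero : ∀ i, pInner π u (v i) = 0 := by
    intro i
    have h1 : pInner π u (v i) = pInner π (P.mulVec u) (v i) := by rw [hPu]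
    rw [rev_symm hrev, heig i, pinner_smul_right] at h1
    have : (1 - lam i) * pInner π u (v i) = 0 := by linarith
    rcases mul_eq_zero.mp this with h | h
    · exact absurd (by linarith : lam i = 1) (hcon i)
    · exact h
  have := expansion π v hor u ⟨0, hn⟩
  simp only [hzero, zero_mul, Finset.sum_const_zero] at this
  exact one_ne_zero this

-- eigenvalue-1 eigenvectors are constant ±1
lemma eig_one_const {π : Fin n → ℝ} {P : Matrix (Fin n) (Fin n) ℝ} (hn : 0 < n)
    (hπsum : ∑ x, π x = 1)
    (hP : IsStochastic P) (hirr : MatIrreducible P)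
    (v : Fin n → ℝ) (hv : P.mulVec v = (1:ℝ) • v) (hnorm : pInner π v v = 1) :
    ∃ c : ℝ, c ^ 2 = 1 ∧ v = fun _ => c := by
  have hv' : P.mulVec v = v := by rw [hv, one_smul]
  set c := v ⟨0, hn⟩ with hc
  have hconst : v = fun _ => c := funext fun x => perron hP hirr v hv' x ⟨0, hn⟩
  refine ⟨c, ?_, hconst⟩
  have : pInner π v v = c ^ 2 * ∑ x, π x := by
    rw [Finset.mul_sum, pInner]
    refine Finset.sum_congr rfl fun x _ => ?_
    rw [hconst]
    ring
  rw [hnorm, hπsum, mul_one] at this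
  exact this.symm

lemma uniq_eig_one {π : Fin n → ℝ} {P : Matrix (Fin n) (Fin n) ℝ} (hn : 0 < n)
    (hπsum : ∑ x, π x = 1)
    (hP : IsStochastic P) (hirr : MatIrreducible P)
    (v : Fin n → Fin n → ℝ) (lam : Fin n → ℝ)
    (hor : ∀ i j, pInner π (v i) (v j) = if i = j then 1 else 0)
    (heig : ∀ i, P.mulVec (v i) = lam i • v i)
    (i j : Fin n) (hi : lam i = 1) (hj : lam j = 1) : i = j := by
  by_contra hij
  obtain ⟨ci, hci, hvi⟩ := eig_one_const hn hπsum hP hirr (v i)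
    (by rw [heig i, hi]) (by have := hor i i; simpa using this)
  obtain ⟨cj, hcj, hvj⟩ := eig_one_const hn hπsum hP hirr (v j)
    (by rw [heig j, hj]) (by have := hor j j; simpa using this)
  have h0 : pInner π (v i) (v j) = 0 := by rw [hor i j, if_neg hij]
  have : pInner π (v i) (v j) = ci * cj * ∑ x, π x := by
    rw [Finset.mul_sum, pInner]
    refine Finset.sum_congr rfl fun x _ => ?_
    rw [hvi, hvj]
  rw [h0, hπsum, mul_one] at this
  have hci0 : ci ≠ 0 := fun h => by rw [h] at hci; norm_num at hci
  have hcj0 : cj ≠ 0 := fun h => by rw [h] at hcj; norm_num at hcj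
  exact (mul_ne_zero hci0 hcj0) this.symm


noncomputable def hfun (l : ℝ) : ℝ := (1 + l) / (1 - l)

noncomputable def fbar {n : ℕ} (π f : Fin n → ℝ) : Fin n → ℝ :=
  fun x => f x - ∑ z, π z * f z

lemma pow_mulVec {n : ℕ} (P : Matrix (Fin n) (Fin n) ℝ) (v : Fin n → ℝ) (l : ℝ)
    (heig : P.mulVec v = l • v) (k : ℕ) : (P ^ k).mulVec v = (l ^ k) • v := by
  induction k with
  | zero => simp
  | succ k ih =>
      rw [pow_succ, ← Matrix.mulVec_mulVec, heig, Matrix.mulVec_smul, ih, pow_succ]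
      rw [smul_smul, mul_comm]

lemma mulVec_expand {n : ℕ} (A : Matrix (Fin n) (Fin n) ℝ) (w : Fin n → ℝ)
    (u : Fin n → Fin n → ℝ) (x : Fin n) :
    A.mulVec (fun y => ∑ j, w j * u j y) x = ∑ j, w j * A.mulVec (u j) x := by
  simp only [mulVec_apply, Finset.mul_sum]
  rw [Finset.sum_comm]
  exact Finset.sum_congr rfl fun j _ => Finset.sum_congr rfl fun y _ => by ring

lemma autocov_eq {n : ℕ} (π : Fin n → ℝ) (P : Matrix (Fin n) (Fin n) ℝ)
    (v : Fin n → Fin n → ℝ) (lam : Fin n → ℝ)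
    (hor : ∀ i j, pInner π (v i) (v j) = if i = j then 1 else 0)
    (heig : ∀ i, P.mulVec (v i) = lam i • v i)
    (f : Fin n → ℝ) (k : ℕ) :
    autocov π P f k = ∑ m, (pInner π (fbar π f) (v m))^2 * lam m ^ k := by
  set g := fbar π f with hg
  have h1 : autocov π P f k = pInner π g ((P ^ k).mulVec g) := by
    simp only [autocov, pInner, mulVec_apply, hg, fbar]
    refine Finset.sum_congr rfl fun x _ => ?_
    rw [Finset.mul_sum, Finset.sum_mul]
    exact Finset.sum_congr rfl fun y _ => by ring
  have hgx : g = fun y => ∑ m, pInner π g (v m) * v m y := funext fun y => expansion π v hor g y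
  have h2 : ∀ x, (P ^ k).mulVec g x = ∑ m, (pInner π g (v m) * lam m ^ k) * v m x := by
    intro x
    calc (P ^ k).mulVec g x = (P ^ k).mulVec (fun y => ∑ m, pInner π g (v m) * v m y) x := by
          rw [← hgx]
      _ = ∑ m, pInner π g (v m) * (P ^ k).mulVec (v m) x := mulVec_expand _ _ _ x
      _ = ∑ m, (pInner π g (v m) * lam m ^ k) * v m x := by
          refine Finset.sum_congr rfl fun m _ => ?_
          rw [pow_mulVec P (v m) (lam m) (heig m) k]
          simp [Pi.smul_apply, smul_eq_mul]
          ring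
  have h3 : (P ^ k).mulVec g = fun x => ∑ m, (pInner π g (v m) * lam m ^ k) * v m x :=
    funext h2
  rw [h1, h3, pinner_sum_right]
  exact Finset.sum_congr rfl fun m _ => by rw [pInner_comm π g (v m)]; ring

lemma varN_eq {n : ℕ} (π : Fin n → ℝ) (P : Matrix (Fin n) (Fin n) ℝ)
    (v : Fin n → Fin n → ℝ) (lam : Fin n → ℝ)
    (hor : ∀ i j, pInner π (v i) (v j) = if i = j then 1 else 0)
    (heig : ∀ i, P.mulVec (v i) = lam i • v i)
    (f : Fin n → ℝ) (N : ℕ) :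
    varN π P f N = ∑ m, (pInner π (fbar π f) (v m))^2 * ((N : ℝ)⁻¹ * Ufun (lam m) N) := by
  unfold varN
  have h1 : ∑ i ∈ Finset.range N, ∑ j ∈ Finset.range N, autocov π P f (max i j - min i j)
      = ∑ m, (pInner π (fbar π f) (v m))^2 * Ufun (lam m) N := by
    have : ∀ i j : ℕ, autocov π P f (max i j - min i j)
        = ∑ m, (pInner π (fbar π f) (v m))^2 * lam m ^ (max i j - min i j) :=
      fun i j => autocov_eq π P v lam hor heig f _
    simp only [this]
    calc ∑ i ∈ Finset.range N, ∑ j ∈ Finset.range N,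
            ∑ m, (pInner π (fbar π f) (v m))^2 * lam m ^ (max i j - min i j)
        = ∑ i ∈ Finset.range N, ∑ m,
            ∑ j ∈ Finset.range N, (pInner π (fbar π f) (v m))^2 * lam m ^ (max i j - min i j) :=
          Finset.sum_congr rfl fun i _ => Finset.sum_comm
      _ = ∑ m, ∑ i ∈ Finset.range N,
            ∑ j ∈ Finset.range N, (pInner π (fbar π f) (v m))^2 * lam m ^ (max i j - min i j) :=
          Finset.sum_comm
      _ = ∑ m, (pInner π (fbar π f) (v m))^2 * Ufun (lam m) N := by
          refine Finset.sum_congr rfl fun m _ => ?_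
          rw [Ufun, Finset.mul_sum]
          exact Finset.sum_congr rfl fun i _ => by rw [Finset.mul_sum]
  rw [h1, Finset.mul_sum]
  exact Finset.sum_congr rfl fun m _ => by ring

lemma hasVar {n : ℕ} (π : Fin n → ℝ) (P : Matrix (Fin n) (Fin n) ℝ)
    (v : Fin n → Fin n → ℝ) (lam : Fin n → ℝ)
    (hor : ∀ i j, pInner π (v i) (v j) = if i = j then 1 else 0)
    (heig : ∀ i, P.mulVec (v i) = lam i • v i)
    (f : Fin n → ℝ)
    (hd1 : ∀ m, lam m = 1 → pInner π (fbar π f) (v m) = 0)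
    (hb : ∀ m, -1 ≤ lam m ∧ lam m ≤ 1) :
    HasAsymptVar π P f (∑ m, (pInner π (fbar π f) (v m))^2 * hfun (lam m)) := by
  unfold HasAsymptVar
  have hrw : varN π P f = fun N : ℕ =>
      ∑ m, (pInner π (fbar π f) (v m))^2 * ((N : ℝ)⁻¹ * Ufun (lam m) N) :=
    funext fun N => varN_eq π P v lam hor heig f N
  rw [hrw]
  apply tendsto_finset_sum
  intro m _
  rcases lt_or_eq_of_le (hb m).2 with hlt | heq
  · exact (Ufun_tendsto (hb m).1 hlt).const_mul _
  · have h0 : pInner π (fbar π f) (v m) = 0 := hd1 m heq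
    simp only [h0]
    simp only [ne_eq, OfNat.ofNat_ne_zero, not_false_eq_true, zero_pow, zero_mul]
    exact tendsto_const_nhds

lemma pinner_fbar {n : ℕ} (π f w : Fin n → ℝ) :
    pInner π (fbar π f) w = pInner π f w - (∑ z, π z * f z) * (∑ z, π z * w z) := by
  simp only [pInner, fbar]
  rw [Finset.mul_sum, ← Finset.sum_sub_distrib]
  exact Finset.sum_congr rfl fun x _ => by ring

lemma pinner_constR {n : ℕ} (π f : Fin n → ℝ) (c : ℝ) :
    pInner π f (fun _ => c) = c * ∑ z, π z * f z := by
  simp only [pInner]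
  rw [Finset.mul_sum]
  exact Finset.sum_congr rfl fun x _ => by ring

lemma pinner_constL {n : ℕ} (π w : Fin n → ℝ) (c : ℝ) :
    pInner π (fun _ => c) w = c * ∑ z, π z * w z := by
  simp only [pInner]
  rw [Finset.mul_sum]
  exact Finset.sum_congr rfl fun x _ => by ring

lemma mean_fbar {n : ℕ} (π : Fin n → ℝ) (hπsum : ∑ x, π x = 1) (f : Fin n → ℝ) :
    ∑ z, π z * fbar π f z = 0 := by
  simp only [fbar, mul_sub]
  rw [Finset.sum_sub_distrib, ← Finset.sum_mul, hπsum, one_mul, sub_self]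

noncomputable def Sform {n : ℕ} (π mu : Fin n → ℝ) (vb : Fin n → Fin n → ℝ)
    (f g : Fin n → ℝ) : ℝ :=
  ∑ m, mu m * (pInner π f (vb m) * pInner π g (vb m))

lemma Sform_symm {n : ℕ} (π mu : Fin n → ℝ) (vb : Fin n → Fin n → ℝ) (f g : Fin n → ℝ) :
    Sform π mu vb f g = Sform π mu vb g f :=
  Finset.sum_congr rfl fun m _ => by ring

lemma pinner_add_left {n : ℕ} (π f g w : Fin n → ℝ) (t : ℝ) :
    pInner π (fun x => f x + t * g x) w = pInner π f w + t * pInner π g w := by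
  simp only [pInner]
  rw [Finset.mul_sum, ← Finset.sum_add_distrib]
  exact Finset.sum_congr rfl fun x _ => by ring

lemma Sform_expand {n : ℕ} (π mu : Fin n → ℝ) (vb : Fin n → Fin n → ℝ) (f g : Fin n → ℝ)
    (t : ℝ) :
    Sform π mu vb (fun x => f x + t * g x) (fun x => f x + t * g x)
    = Sform π mu vb f f + 2 * t * Sform π mu vb f g + t ^ 2 * Sform π mu vb g g := by
  simp only [Sform, pinner_add_left]
  rw [Finset.mul_sum, Finset.mul_sum, ← Finset.sum_add_distrib, ← Finset.sum_add_distrib]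
  exact Finset.sum_congr rfl fun m _ => by ring

lemma Sform_sum_left {n : ℕ} (π mu : Fin n → ℝ) (vb : Fin n → Fin n → ℝ)
    (w : Fin n → ℝ) (u : Fin n → Fin n → ℝ) (g : Fin n → ℝ) :
    Sform π mu vb (fun x => ∑ i, w i * u i x) g = ∑ i, w i * Sform π mu vb (u i) g := by
  simp only [Sform, pinner_sum_left]
  have h1 : ∀ m, mu m * ((∑ i, w i * pInner π (u i) (vb m)) * pInner π g (vb m))
      = ∑ i, w i * (mu m * (pInner π (u i) (vb m) * pInner π g (vb m))) := by
    intro m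
    rw [Finset.sum_mul, Finset.mul_sum]
    exact Finset.sum_congr rfl fun i _ => by ring
  simp only [h1]
  rw [Finset.sum_comm]
  exact Finset.sum_congr rfl fun i _ => by rw [Finset.mul_sum]

lemma Sform_basis {n : ℕ} (π mu : Fin n → ℝ) (vb : Fin n → Fin n → ℝ)
    (hor : ∀ i j, pInner π (vb i) (vb j) = if i = j then 1 else 0) (f : Fin n → ℝ) (j : Fin n) :
    Sform π mu vb f (vb j) = mu j * pInner π f (vb j) := by
  have h : ∀ m, mu m * (pInner π f (vb m) * pInner π (vb j) (vb m))
      = if j = m then mu m * pInner π f (vb m) else 0 := by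
    intro m
    rw [hor j m]
    by_cases h : j = m <;> simp [h]
  simp only [Sform, h]
  rw [Finset.sum_ite_eq]
  simp

lemma psd_cs {A B C : ℝ} (hA : A = 0) (hC : 0 ≤ C)
    (h : ∀ t : ℝ, 0 ≤ A + 2 * t * B + t ^ 2 * C) : B = 0 := by
  have hC1 : 0 < C + 1 := by linarith
  have h1 := h (-(B / (C + 1)))
  rw [hA] at h1
  have h2 : 0 ≤ (0 + 2 * (-(B / (C + 1))) * B + (-(B / (C + 1))) ^ 2 * C) * (C + 1) ^ 2 :=
    mul_nonneg h1 (sq_nonneg _)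
  have h3 : (0 + 2 * (-(B / (C + 1))) * B + (-(B / (C + 1))) ^ 2 * C) * (C + 1) ^ 2
      = -(B ^ 2) * (C + 2) := by
    field_simp
    ring
  rw [h3] at h2
  have hB2 : B ^ 2 = 0 := by nlinarith [sq_nonneg B]
  exact pow_eq_zero_iff two_ne_zero |>.mp hB2

theorem key {n : ℕ} (π : Fin n → ℝ) (P Q : Matrix (Fin n) (Fin n) ℝ)
    (hπpos : ∀ x, 0 < π x) (hπsum : ∑ x, π x = 1)
    (hP : IsStochastic P) (hQ : IsStochastic Q)
    (hirrP : MatIrreducible P) (hirrQ : MatIrreducible Q)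
    (hrevP : IsReversible π P) (hrevQ : IsReversible π Q)
    (vP vQ : Fin n → Fin n → ℝ) (lam : Fin n → ℝ)
    (horthoP : ∀ i j, pInner π (vP i) (vP j) = if i = j then 1 else 0)
    (horthoQ : ∀ i j, pInner π (vQ i) (vQ j) = if i = j then 1 else 0)
    (heigP : ∀ i, P.mulVec (vP i) = lam i • vP i)
    (heigQ : ∀ i, Q.mulVec (vQ i) = lam i • vQ i)
    (ED : EffDom π P Q) : P = Q := by
  rcases Nat.eq_zero_or_pos n with hn0 | hn
  · ext x y
    exact absurd x.pos (by omega)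
  obtain ⟨i0, hi0⟩ := exists_eig_one hn hP hrevP vP lam horthoP heigP
  have huniq : ∀ m, lam m = 1 → m = i0 := fun m hm =>
    uniq_eig_one hn hπsum hP hirrP vP lam horthoP heigP m i0 hm hi0
  have hnormP : ∀ i, pInner π (vP i) (vP i) = 1 := fun i => by have := horthoP i i; simpa using this
  have hnormQ : ∀ i, pInner π (vQ i) (vQ i) = 1 := fun i => by have := horthoQ i i; simpa using this
  obtain ⟨cP, hcP2, hcPc⟩ := eig_one_const hn hπsum hP hirrP (vP i0)
    (by rw [heigP i0, hi0]) (hnormP i0)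
  obtain ⟨cQ, hcQ2, hcQc⟩ := eig_one_const hn hπsum hQ hirrQ (vQ i0)
    (by rw [heigQ i0, hi0]) (hnormQ i0)
  have hcP0 : cP ≠ 0 := fun h => by rw [h] at hcP2; norm_num at hcP2
  have hcQ0 : cQ ≠ 0 := fun h => by rw [h] at hcQ2; norm_num at hcQ2
  have hb : ∀ m, -1 ≤ lam m ∧ lam m ≤ 1 := by
    intro m
    have h := eig_sq_le_one hπpos hP hrevP (vP m) (lam m) (heigP m) (hnormP m)
    constructor <;> nlinarith [h]
  have hlamlt : ∀ m, m ≠ i0 → lam m < 1 := fun m hm =>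
    lt_of_le_of_ne (hb m).2 (fun h => hm (huniq m h))
  have hfun_nonneg : ∀ m, m ≠ i0 → 0 ≤ hfun (lam m) := fun m hm =>
    div_nonneg (by linarith [(hb m).1]) (by linarith [hlamlt m hm])
  have meanP0 : ∀ m, m ≠ i0 → ∑ z, π z * vP m z = 0 := by
    intro m hm
    have h1 : pInner π (vP m) (vP i0) = 0 := by rw [horthoP m i0, if_neg hm]
    rw [hcPc, pinner_constR] at h1
    exact (mul_eq_zero.mp h1).resolve_left hcP0
  have meanQ0 : ∀ m, m ≠ i0 → ∑ z, π z * vQ m z = 0 := by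
    intro m hm
    have h1 : pInner π (vQ m) (vQ i0) = 0 := by rw [horthoQ m i0, if_neg hm]
    rw [hcQc, pinner_constR] at h1
    exact (mul_eq_zero.mp h1).resolve_left hcQ0
  have hd1P : ∀ (f : Fin n → ℝ) m, lam m = 1 → pInner π (fbar π f) (vP m) = 0 := by
    intro f m hm
    have hmi := huniq m hm
    subst hmi
    rw [hcPc, pinner_constR, mean_fbar π hπsum f, mul_zero]
  have hd1Q : ∀ (f : Fin n → ℝ) m, lam m = 1 → pInner π (fbar π f) (vQ m) = 0 := by
    intro f m hm
    have hmi := huniq m hm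
    subst hmi
    rw [hcQc, pinner_constR, mean_fbar π hπsum f, mul_zero]
  have hle : ∀ f : Fin n → ℝ,
      (∑ m, (pInner π (fbar π f) (vP m))^2 * hfun (lam m))
      ≤ (∑ m, (pInner π (fbar π f) (vQ m))^2 * hfun (lam m)) := fun f =>
    ED f _ _ (hasVar π P vP lam horthoP heigP f (hd1P f) hb)
      (hasVar π Q vQ lam horthoQ heigQ f (hd1Q f) hb)
  have fbarQ : ∀ i, i ≠ i0 → fbar π (vQ i) = vQ i := by
    intro i hi
    funext x
    simp [fbar, meanQ0 i hi]
  have hVQeig : ∀ i, i ≠ i0 →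
      (∑ m, (pInner π (fbar π (vQ i)) (vQ m))^2 * hfun (lam m)) = hfun (lam i) := by
    intro i hi
    rw [fbarQ i hi]
    have h : ∀ m, (pInner π (vQ i) (vQ m))^2 * hfun (lam m)
        = if i = m then hfun (lam m) else 0 := by
      intro m
      rw [horthoQ i m]
      by_cases h : i = m <;> simp [h]
    simp only [h]
    rw [Finset.sum_ite_eq]
    simp
  have hVPeig : ∀ i, i ≠ i0 →
      (∑ m, (pInner π (fbar π (vQ i)) (vP m))^2 * hfun (lam m))
      = ∑ m, (pInner π (vQ i) (vP m))^2 * hfun (lam m) := by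
    intro i hi
    rw [fbarQ i hi]
  have hOrow : ∀ m, ∑ i, (pInner π (vQ i) (vP m))^2 = 1 := by
    intro m
    have h := parseval π vQ horthoQ (vP m)
    rw [hnormP m] at h
    calc ∑ i, (pInner π (vQ i) (vP m))^2 = ∑ i, (pInner π (vP m) (vQ i))^2 :=
          Finset.sum_congr rfl fun i _ => by rw [pInner_comm π (vQ i) (vP m)]
      _ = 1 := h.symm
  have traceP : ∑ i ∈ Finset.univ.erase i0,
      (∑ m, (pInner π (vQ i) (vP m))^2 * hfun (lam m))
      = ∑ i ∈ Finset.univ.erase i0, hfun (lam i) := by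
    rw [Finset.sum_comm]
    have hFi0 : (∑ i ∈ Finset.univ.erase i0, (pInner π (vQ i) (vP i0))^2 * hfun (lam i0)) = 0 := by
      refine Finset.sum_eq_zero fun i hi => ?_
      rw [hcPc, pinner_constR, meanQ0 i (Finset.ne_of_mem_erase hi), mul_zero]
      simp
    rw [← Finset.sum_erase (f := fun m => ∑ i ∈ Finset.univ.erase i0,
      (pInner π (vQ i) (vP m))^2 * hfun (lam m)) Finset.univ hFi0]
    refine Finset.sum_congr rfl fun m hm => ?_
    have hm' : m ≠ i0 := Finset.ne_of_mem_erase hm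
    have h1 : ∑ i ∈ Finset.univ.erase i0, (pInner π (vQ i) (vP m))^2 * hfun (lam m)
        = ((∑ i, (pInner π (vQ i) (vP m))^2) - (pInner π (vQ i0) (vP m))^2) * hfun (lam m) := by
      rw [Finset.sum_erase_eq_sub (Finset.mem_univ i0), sub_mul, Finset.sum_mul]
    rw [h1, hOrow m]
    have h2 : pInner π (vQ i0) (vP m) = 0 := by
      rw [hcQc, pinner_constL, meanP0 m hm', mul_zero]
    rw [h2]
    ring
  have hge : ∀ i ∈ Finset.univ.erase i0,
      (∑ m, (pInner π (vQ i) (vP m))^2 * hfun (lam m)) ≤ hfun (lam i) := by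
    intro i hi
    have hi' : i ≠ i0 := Finset.ne_of_mem_erase hi
    calc (∑ m, (pInner π (vQ i) (vP m))^2 * hfun (lam m))
        = ∑ m, (pInner π (fbar π (vQ i)) (vP m))^2 * hfun (lam m) := (hVPeig i hi').symm
      _ ≤ ∑ m, (pInner π (fbar π (vQ i)) (vQ m))^2 * hfun (lam m) := hle (vQ i)
      _ = hfun (lam i) := hVQeig i hi'
  have hsum0 : ∑ i ∈ Finset.univ.erase i0,
      (hfun (lam i) - ∑ m, (pInner π (vQ i) (vP m))^2 * hfun (lam m)) = 0 := by
    rw [Finset.sum_sub_distrib, traceP, sub_self]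
  have heach : ∀ i, i ≠ i0 →
      (∑ m, (pInner π (vQ i) (vP m))^2 * hfun (lam m)) = hfun (lam i) := by
    intro i hi
    have hmem : i ∈ Finset.univ.erase i0 := Finset.mem_erase.mpr ⟨hi, Finset.mem_univ i⟩
    have := (Finset.sum_eq_zero_iff_of_nonneg
      (fun i hi => sub_nonneg.mpr (hge i hi))).mp hsum0 i hmem
    linarith
  set mu : Fin n → ℝ := fun m => if m = i0 then (-1:ℝ) else hfun (lam m) with hmu
  have hSP : ∀ f : Fin n → ℝ, Sform π mu vP f f
      = (∑ m, (pInner π (fbar π f) (vP m))^2 * hfun (lam m)) - (∑ z, π z * f z)^2 := by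
    intro f
    have hterm : ∀ m, mu m * (pInner π f (vP m) * pInner π f (vP m))
        - (pInner π (fbar π f) (vP m))^2 * hfun (lam m)
        = if m = i0 then -(∑ z, π z * f z)^2 else 0 := by
      intro m
      by_cases hm : m = i0
      · subst hm
        rw [if_pos rfl]
        have hmu0 : mu m = -1 := by simp [hmu]
        rw [hmu0, hd1P f m hi0, hcPc, pinner_constR]
        have h0 : (0:ℝ)^2 * hfun (lam m) = 0 := by ring
        rw [h0, sub_zero]
        linear_combination (-(∑ z, π z * f z)^2) * hcP2
      · rw [if_neg hm]
        have hmu0 : mu m = hfun (lam m) := by simp [hmu, hm]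
        rw [hmu0, pinner_fbar, meanP0 m hm, mul_zero, sub_zero]
        ring
    have h2 : Sform π mu vP f f - (∑ m, (pInner π (fbar π f) (vP m))^2 * hfun (lam m))
        = -(∑ z, π z * f z)^2 := by
      rw [Sform, ← Finset.sum_sub_distrib]
      rw [Finset.sum_congr rfl fun m _ => hterm m]
      rw [Finset.sum_ite_eq' Finset.univ i0 (fun _ => -(∑ z, π z * f z)^2)]
      simp
    linarith
  have hSQ : ∀ f : Fin n → ℝ, Sform π mu vQ f f
      = (∑ m, (pInner π (fbar π f) (vQ m))^2 * hfun (lam m)) - (∑ z, π z * f z)^2 := by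
    intro f
    have hterm : ∀ m, mu m * (pInner π f (vQ m) * pInner π f (vQ m))
        - (pInner π (fbar π f) (vQ m))^2 * hfun (lam m)
        = if m = i0 then -(∑ z, π z * f z)^2 else 0 := by
      intro m
      by_cases hm : m = i0
      · subst hm
        rw [if_pos rfl]
        have hmu0 : mu m = -1 := by simp [hmu]
        rw [hmu0, hd1Q f m hi0, hcQc, pinner_constR]
        have h0 : (0:ℝ)^2 * hfun (lam m) = 0 := by ring
        rw [h0, sub_zero]
        linear_combination (-(∑ z, π z * f z)^2) * hcQ2
      · rw [if_neg hm]
        have hmu0 : mu m = hfun (lam m) := by simp [hmu, hm]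
        rw [hmu0, pinner_fbar, meanQ0 m hm, mul_zero, sub_zero]
        ring
    have h2 : Sform π mu vQ f f - (∑ m, (pInner π (fbar π f) (vQ m))^2 * hfun (lam m))
        = -(∑ z, π z * f z)^2 := by
      rw [Sform, ← Finset.sum_sub_distrib]
      rw [Finset.sum_congr rfl fun m _ => hterm m]
      rw [Finset.sum_ite_eq' Finset.univ i0 (fun _ => -(∑ z, π z * f z)^2)]
      simp
    linarith
  have hDpsd : ∀ f : Fin n → ℝ, 0 ≤ Sform π mu vQ f f - Sform π mu vP f f := by
    intro f
    have h := hle f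
    rw [hSP f, hSQ f]
    linarith
  have hfbar_i0 : fbar π (vQ i0) = fun _ => 0 := by
    funext x
    simp only [fbar, hcQc]
    rw [show (∑ z, π z * cQ) = (∑ z, π z) * cQ from (Finset.sum_mul _ _ _).symm, hπsum, one_mul,
      sub_self]
  have hDdiag : ∀ i, Sform π mu vQ (vQ i) (vQ i) - Sform π mu vP (vQ i) (vQ i) = 0 := by
    intro i
    rw [hSP, hSQ]
    by_cases hi : i = i0
    · subst hi
      rw [hfbar_i0]
      simp [pinner_constL]
    · rw [hVPeig i hi, hVQeig i hi, heach i hi]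
      ring
  have hDrow : ∀ (i : Fin n) (g : Fin n → ℝ),
      Sform π mu vQ (vQ i) g - Sform π mu vP (vQ i) g = 0 := by
    intro i g
    refine psd_cs (hDdiag i) (hDpsd g) (fun t => ?_)
    have h := hDpsd (fun x => vQ i x + t * g x)
    rw [Sform_expand, Sform_expand] at h
    linarith
  have hDall : ∀ f g : Fin n → ℝ, Sform π mu vQ f g = Sform π mu vP f g := by
    intro f g
    have hf : f = fun x => ∑ i, pInner π f (vQ i) * vQ i x :=
      funext fun x => expansion π vQ horthoQ f x
    have h1 : Sform π mu vP f g = ∑ i, pInner π f (vQ i) * Sform π mu vP (vQ i) g := by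
      conv_lhs => rw [hf]
      exact Sform_sum_left π mu vP _ _ g
    have h2 : Sform π mu vQ f g = ∑ i, pInner π f (vQ i) * Sform π mu vQ (vQ i) g := by
      conv_lhs => rw [hf]
      exact Sform_sum_left π mu vQ _ _ g
    rw [h1, h2]
    refine Finset.sum_congr rfl fun i _ => ?_
    rw [sub_eq_zero.mp (hDrow i g)]
  have hmuO : ∀ i j, mu j * pInner π (vQ i) (vP j) = mu i * pInner π (vQ i) (vP j) := by
    intro i j
    have h := hDall (vQ i) (vP j)
    rw [Sform_basis π mu vP horthoP (vQ i) j] at h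
    rw [Sform_symm π mu vQ (vQ i) (vP j), Sform_basis π mu vQ horthoQ (vP j) i,
      pInner_comm π (vP j) (vQ i)] at h
    linarith [h]
  have hmu_lam : ∀ i j, mu i = mu j → lam i = lam j := by
    intro i j h
    by_cases hi : i = i0 <;> by_cases hj : j = i0
    · rw [hi, hj]
    · exfalso
      simp only [hmu, if_pos hi, if_neg hj] at h
      have := hfun_nonneg j hj
      linarith
    · exfalso
      simp only [hmu, if_neg hi, if_pos hj] at h
      have := hfun_nonneg i hi
      linarith
    · simp only [hmu, if_neg hi, if_neg hj] at h
      have hai := hlamlt i hi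
      have haj := hlamlt j hj
      have h1i := (hb i).1
      have h1j := (hb j).1
      rw [hfun, hfun, div_eq_div_iff (by linarith) (by linarith)] at h
      nlinarith [h]
  have hO0 : ∀ i j, lam j ≠ lam i → pInner π (vQ i) (vP j) = 0 := by
    intro i j hne'
    by_contra hOne
    exact hne' (hmu_lam j i (mul_right_cancel₀ hOne (hmuO i j)))
  have hvecs : ∀ i, P.mulVec (vQ i) = Q.mulVec (vQ i) := by
    intro i
    rw [heigQ i]
    funext x
    have hq : vQ i = fun y => ∑ j, pInner π (vQ i) (vP j) * vP j y :=
      funext fun y => expansion π vP horthoP (vQ i) y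
    calc P.mulVec (vQ i) x
        = P.mulVec (fun y => ∑ j, pInner π (vQ i) (vP j) * vP j y) x := by rw [← hq]
      _ = ∑ j, pInner π (vQ i) (vP j) * P.mulVec (vP j) x := mulVec_expand _ _ _ x
      _ = ∑ j, pInner π (vQ i) (vP j) * (lam i * vP j x) := by
          refine Finset.sum_congr rfl fun j _ => ?_
          rw [heigP j]
          simp only [Pi.smul_apply, smul_eq_mul]
          by_cases hlj : lam j = lam i
          · rw [hlj]
          · rw [hO0 i j hlj]
            ring
      _ = lam i * ∑ j, pInner π (vQ i) (vP j) * vP j x := by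
          rw [Finset.mul_sum]
          exact Finset.sum_congr rfl fun j _ => by ring
      _ = lam i * vQ i x := by rw [← expansion π vP horthoP (vQ i) x]
      _ = (lam i • vQ i) x := by simp
  have hall : ∀ f : Fin n → ℝ, P.mulVec f = Q.mulVec f := by
    intro f
    funext x
    have hf : f = fun y => ∑ i, pInner π f (vQ i) * vQ i y :=
      funext fun y => expansion π vQ horthoQ f y
    calc P.mulVec f x
        = P.mulVec (fun y => ∑ i, pInner π f (vQ i) * vQ i y) x := by rw [← hf]
      _ = ∑ i, pInner π f (vQ i) * P.mulVec (vQ i) x := mulVec_expand _ _ _ x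
      _ = ∑ i, pInner π f (vQ i) * Q.mulVec (vQ i) x :=
          Finset.sum_congr rfl fun i _ => by rw [hvecs i]
      _ = Q.mulVec (fun y => ∑ i, pInner π f (vQ i) * vQ i y) x := (mulVec_expand _ _ _ x).symm
      _ = Q.mulVec f x := by rw [← hf]
  ext x y
  have h := congrFun (hall (Pi.single y 1)) x
  rw [mulVec_apply, mulVec_apply] at h
  simpa [Pi.single_apply, mul_ite, Finset.sum_ite_eq'] using h
end SD

end

theorem stmt15 {n : ℕ} (π : Fin n → ℝ) (P Q : Matrix (Fin n) (Fin n) ℝ)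
    (hπpos : ∀ x, 0 < π x) (hπsum : ∑ x, π x = 1)
    (hP : IsStochastic P) (hQ : IsStochastic Q)
    (hirrP : MatIrreducible P) (hirrQ : MatIrreducible Q)
    (hrevP : IsReversible π P) (hrevQ : IsReversible π Q)
    (vP vQ : Fin n → Fin n → ℝ) (lam : Fin n → ℝ)
    (horthoP : ∀ i j, pInner π (vP i) (vP j) = if i = j then 1 else 0)
    (horthoQ : ∀ i j, pInner π (vQ i) (vQ j) = if i = j then 1 else 0)
    (heigP : ∀ i, P.mulVec (vP i) = lam i • vP i)
    (heigQ : ∀ i, Q.mulVec (vQ i) = lam i • vQ i)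
    (hne : P ≠ Q) :
    ¬ EffDom π P Q ∧ ¬ EffDom π Q P := by
  constructor
  · intro h
    exact hne (SD.key π P Q hπpos hπsum hP hQ hirrP hirrQ hrevP hrevQ vP vQ lam
      horthoP horthoQ heigP heigQ h)
  · intro h
    exact hne (SD.key π Q P hπpos hπsum hQ hP hirrQ hirrP hrevQ hrevP vQ vP lam
      horthoQ horthoP heigQ heigP h).symm
end

section
/- For any transition matrix P on a finite state space S for which π is a stationary distribution, trace(P) ≥ max(0, (2π_max − 1)/π_max), where π_max = max_x π(x). Moreover, if trace(P) attains this minimum, then P has at most one non-zero diagonal entry, and any such entry is at a state x* with π(x*) = π_max > 1/2. -/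
open Matrix BigOperators Filter

theorem stmt16 {n : ℕ} (π : Fin n → ℝ) (P : Matrix (Fin n) (Fin n) ℝ)
    (hπpos : ∀ x, 0 < π x) (hπsum : ∑ x, π x = 1)
    (hP : IsStochastic P)
    (hstat : ∀ y, ∑ x, π x * P x y = π y)
    (pm : ℝ) (hpm : IsGreatest (Set.range π) pm) :
    max 0 ((2 * pm - 1) / pm) ≤ P.trace ∧
    (P.trace = max 0 ((2 * pm - 1) / pm) →
      (∀ x y, P x x ≠ 0 → P y y ≠ 0 → x = y) ∧
      ∀ x, P x x ≠ 0 → π x = pm ∧ 1 / 2 < pm) := by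
  obtain ⟨⟨x0, hx0⟩, hub⟩ := hpm
  have hpm_pos : 0 < pm := hx0 ▸ hπpos x0
  have hPle1 : ∀ y x, P y x ≤ 1 := by
    intro y x
    calc P y x ≤ ∑ z, P y z :=
          Finset.single_le_sum (fun z _ => hP.1 y z) (Finset.mem_univ x)
      _ = 1 := hP.2 y
  have key : ∀ x, (2 * π x - 1) / π x ≤ P x x := by
    intro x
    rw [div_le_iff₀ (hπpos x)]
    have h1 : π x = ∑ y, π y * P y x := (hstat x).symm
    have h2 : ∑ y, π y * P y x ≤ π x * P x x + (1 - π x) := by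
      rw [← Finset.add_sum_erase _ _ (Finset.mem_univ x)]
      have h3 : ∑ y ∈ Finset.univ.erase x, π y * P y x ≤ ∑ y ∈ Finset.univ.erase x, π y :=
        Finset.sum_le_sum fun y _ =>
          mul_le_of_le_one_right (hπpos y).le (hPle1 y x)
      have hsum : ∑ y ∈ Finset.univ.erase x, π y = 1 - π x := by
        rw [Finset.sum_erase_eq_sub (Finset.mem_univ x), hπsum]
      linarith
    nlinarith [mul_comm (π x) (P x x)]
  have htr : P.trace = ∑ x, P x x := by simp [Matrix.trace, Matrix.diag]
  have htr_ge : ∀ x, P x x ≤ P.trace := by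
    intro x
    rw [htr]
    exact Finset.single_le_sum (fun z _ => hP.1 z z) (Finset.mem_univ x)
  have htr0 : 0 ≤ P.trace := by
    rw [htr]; exact Finset.sum_nonneg fun z _ => hP.1 z z
  have hfirst : max 0 ((2 * pm - 1) / pm) ≤ P.trace := by
    refine max_le htr0 ?_
    calc (2 * pm - 1) / pm = (2 * π x0 - 1) / π x0 := by rw [hx0]
      _ ≤ P x0 x0 := key x0
      _ ≤ P.trace := htr_ge x0
  refine ⟨hfirst, fun heq => ?_⟩
  by_cases hhalf : pm ≤ 1 / 2
  · -- max = 0, trace = 0, all diagonal zero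
    have hM : (2 * pm - 1) / pm ≤ 0 :=
      div_nonpos_of_nonpos_of_nonneg (by linarith) hpm_pos.le
    have htr_eq : P.trace = 0 := by rw [heq, max_eq_left hM]
    have hdiag : ∀ x, P x x = 0 := by
      intro x
      rw [htr] at htr_eq
      exact (Finset.sum_eq_zero_iff_of_nonneg (fun z _ => hP.1 z z)).mp htr_eq x
        (Finset.mem_univ x)
    exact ⟨fun x y hx _ => absurd (hdiag x) hx,
      fun x hx => absurd (hdiag x) hx⟩
  · push_neg at hhalf
    have hMpos : 0 < (2 * pm - 1) / pm := div_pos (by linarith) hpm_pos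
    have htr_eq : P.trace = (2 * pm - 1) / pm := by
      rw [heq, max_eq_right hMpos.le]
    -- all off-x0 diagonal entries vanish
    have hx0key : (2 * pm - 1) / pm ≤ P x0 x0 := by
      have := key x0; rwa [hx0] at this
    have hothers : ∀ y, y ≠ x0 → P y y = 0 := by
      intro y hy
      have hsplit : ∑ x, P x x = P x0 x0 + ∑ x ∈ Finset.univ.erase x0, P x x := by
        exact (Finset.add_sum_erase _ (fun x => P x x) (Finset.mem_univ x0)).symm
      have hnn : 0 ≤ ∑ x ∈ Finset.univ.erase x0, P x x :=
        Finset.sum_nonneg fun z _ => hP.1 z z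
      have hz : ∑ x ∈ Finset.univ.erase x0, P x x = 0 := by
        rw [htr] at htr_eq
        linarith
      exact (Finset.sum_eq_zero_iff_of_nonneg (fun z _ => hP.1 z z)).mp hz y
        (Finset.mem_erase.mpr ⟨hy, Finset.mem_univ y⟩)
    have hforced : ∀ x, P x x ≠ 0 → x = x0 := by
      intro x hx
      by_contra hne
      exact hx (hothers x hne)
    refine ⟨fun x y hx hy => (hforced x hx).trans (hforced y hy).symm, ?_⟩
    intro x hx
    rw [hforced x hx, hx0]
    exact ⟨rfl, hhalf⟩
end

section
/- If P is irreducible, reversible with respect to π, and trace(P) = max(0, (2π_max − 1)/π_max) where π_max = max_x π(x), then no other transition matrix reversible with respect to π can efficiency-dominate P. -/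
open Matrix BigOperators Filter

namespace Stmt17Aux

variable {n : ℕ}

noncomputable def sqp (π : Fin n → ℝ) : Fin n → ℝ := fun x => Real.sqrt (π x)

noncomputable def Smat (π : Fin n → ℝ) (R : Matrix (Fin n) (Fin n) ℝ) : Matrix (Fin n) (Fin n) ℝ :=
  Matrix.diagonal (sqp π) * R * Matrix.diagonal (fun x => (sqp π x)⁻¹)

noncomputable def gbar (π f : Fin n → ℝ) : Fin n → ℝ :=
  fun x => sqp π x * (f x - ∑ z, π z * f z)

noncomputable def Mmat (π : Fin n → ℝ) (R : Matrix (Fin n) (Fin n) ℝ) : Matrix (Fin n) (Fin n) ℝ :=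
  1 - Smat π R + vecMulVec (sqp π) (sqp π)

noncomputable def Tsum (lam : ℝ) (N : ℕ) : ℝ :=
  ∑ i ∈ Finset.range N, ∑ j ∈ Finset.range N, lam ^ (max i j - min i j)

lemma sandwich_apply (d e : Fin n → ℝ) (A : Matrix (Fin n) (Fin n) ℝ) (x y : Fin n) :
    (Matrix.diagonal d * A * Matrix.diagonal e) x y = d x * A x y * e y := by
  rw [Matrix.mul_diagonal, Matrix.diagonal_mul]

lemma stoch_pow {P : Matrix (Fin n) (Fin n) ℝ} (hP : IsStochastic P) (k : ℕ) :
    IsStochastic (P ^ k) := by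
  induction k with
  | zero =>
    constructor
    · intro x y
      simp [pow_zero, Matrix.one_apply]
      split <;> norm_num
    · intro x; simp [pow_zero, Matrix.one_apply]
  | succ k ih =>
    rw [pow_succ]
    constructor
    · intro x y
      rw [Matrix.mul_apply]
      exact Finset.sum_nonneg fun z _ => mul_nonneg (ih.1 x z) (hP.1 z y)
    · intro x
      simp_rw [Matrix.mul_apply]
      rw [Finset.sum_comm]
      simp_rw [← Finset.mul_sum, hP.2, mul_one]
      exact ih.2 x

/-- vector fixed by stochastic irreducible matrix is constant -/
lemma fixed_const {P : Matrix (Fin n) (Fin n) ℝ} (hP : IsStochastic P)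
    (hirr : MatIrreducible P) {v : Fin n → ℝ} (hv : P *ᵥ v = v) (x y : Fin n) :
    v x = v y := by
  have hne : Nonempty (Fin n) := ⟨x⟩
  obtain ⟨x0, -, hx0⟩ := Finset.exists_max_image Finset.univ v ⟨x, Finset.mem_univ x⟩
  have hpow : ∀ k, (P ^ k) *ᵥ v = v := by
    intro k
    induction k with
    | zero => simp
    | succ k ih => rw [pow_succ, ← Matrix.mulVec_mulVec, hv, ih]
  suffices h : ∀ z, v z = v x0 by rw [h x, h y]
  intro z
  obtain ⟨k, hk⟩ := hirr x0 z
  have hsum : ∑ u, (P ^ k) x0 u * (v x0 - v u) = 0 := by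
    have h1 := congrFun (hpow k) x0
    simp only [Matrix.mulVec, dotProduct] at h1
    have h2 := (stoch_pow hP k).2 x0
    simp_rw [mul_sub, Finset.sum_sub_distrib, ← Finset.sum_mul, h2, one_mul, h1, sub_self]
  have hterm : ∀ u ∈ Finset.univ, (0:ℝ) ≤ (P ^ k) x0 u * (v x0 - v u) := by
    intro u _
    exact mul_nonneg ((stoch_pow hP k).1 x0 u) (sub_nonneg.2 (hx0 u (Finset.mem_univ u)))
  have := (Finset.sum_eq_zero_iff_of_nonneg hterm).1 hsum z (Finset.mem_univ z)
  rcases mul_eq_zero.1 this with h | h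
  · exact absurd h (ne_of_gt hk)
  · linarith [sub_eq_zero.1 h]

/-- eigenvalue bound for stochastic matrices -/
lemma eig_bound {P : Matrix (Fin n) (Fin n) ℝ} (hP : IsStochastic P)
    {v : Fin n → ℝ} {lam : ℝ} (hv : P *ᵥ v = lam • v) (hv0 : v ≠ 0) :
    |lam| ≤ 1 := by
  have hne : Nonempty (Fin n) := by
    by_contra h
    exact hv0 (funext fun x => absurd ⟨x⟩ h)
  obtain ⟨x0, -, hx0⟩ := Finset.exists_max_image Finset.univ (fun x => |v x|)
    ⟨Classical.arbitrary (Fin n), Finset.mem_univ _⟩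
  have hvx0 : 0 < |v x0| := by
    obtain ⟨z, hz⟩ : ∃ z, v z ≠ 0 := by
      by_contra h
      push_neg at h
      exact hv0 (funext h)
    exact lt_of_lt_of_le (abs_pos.2 hz) (hx0 z (Finset.mem_univ z))
  have h1 : |lam| * |v x0| ≤ |v x0| := by
    have h2 := congrFun hv x0
    simp only [Matrix.mulVec, dotProduct, Pi.smul_apply, smul_eq_mul] at h2
    calc |lam| * |v x0| = |∑ y, P x0 y * v y| := by rw [← abs_mul, h2]
    _ ≤ ∑ y, |P x0 y * v y| := Finset.abs_sum_le_sum_abs _ _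
    _ ≤ ∑ y, P x0 y * |v x0| := by
        apply Finset.sum_le_sum
        intro y _
        rw [abs_mul, abs_of_nonneg (hP.1 x0 y)]
        exact mul_le_mul_of_nonneg_left ((hx0 y (Finset.mem_univ y))) (hP.1 x0 y)
    _ = |v x0| := by rw [← Finset.sum_mul, hP.2, one_mul]
  exact le_of_mul_le_mul_right (by linarith) hvx0


section
variable {π : Fin n → ℝ} (hπpos : ∀ x, 0 < π x)

include hπpos

lemma sqp_pos (x : Fin n) : 0 < sqp π x := Real.sqrt_pos.2 (hπpos x)

lemma sqp_sq (x : Fin n) : sqp π x * sqp π x = π x := Real.mul_self_sqrt (hπpos x).le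

lemma Smat_symm {R : Matrix (Fin n) (Fin n) ℝ} (hrev : IsReversible π R) :
    (Smat π R)ᵀ = Smat π R := by
  ext x y
  rw [Matrix.transpose_apply, Smat, sandwich_apply, sandwich_apply]
  have h := hrev x y
  have hx := (sqp_pos hπpos x).ne'
  have hy := (sqp_pos hπpos y).ne'
  have hx2 := sqp_sq hπpos x
  have hy2 := sqp_sq hπpos y
  field_simp
  linear_combination R y x * hy2 - R x y * hx2 - h

lemma Smat_pow (R : Matrix (Fin n) (Fin n) ℝ) (k : ℕ) :
    (Smat π R) ^ k = Matrix.diagonal (sqp π) * (R ^ k) * Matrix.diagonal (fun x => (sqp π x)⁻¹) := by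
  have hDE : Matrix.diagonal (fun x : Fin n => (sqp π x)⁻¹) * Matrix.diagonal (sqp π) = 1 := by
    have h1 : (fun x => (sqp π x)⁻¹ * sqp π x) = fun _ : Fin n => (1:ℝ) :=
      funext fun x => inv_mul_cancel₀ (sqp_pos hπpos x).ne'
    rw [Matrix.diagonal_mul_diagonal, h1, Matrix.diagonal_one]
  induction k with
  | zero =>
    have hED : Matrix.diagonal (sqp π) * Matrix.diagonal (fun x : Fin n => (sqp π x)⁻¹) = 1 := by
      have h1 : (fun x => sqp π x * (sqp π x)⁻¹) = fun _ : Fin n => (1:ℝ) :=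
        funext fun x => mul_inv_cancel₀ (sqp_pos hπpos x).ne'
      rw [Matrix.diagonal_mul_diagonal, h1, Matrix.diagonal_one]
    simp [pow_zero, ← Matrix.mul_assoc, hED]
  | succ k ih =>
    rw [pow_succ, ih, Smat]
    rw [show Matrix.diagonal (sqp π) * R ^ k * Matrix.diagonal (fun x : Fin n => (sqp π x)⁻¹) *
        (Matrix.diagonal (sqp π) * R * Matrix.diagonal fun x => (sqp π x)⁻¹)
        = Matrix.diagonal (sqp π) * R ^ k * (Matrix.diagonal (fun x : Fin n => (sqp π x)⁻¹) *
        Matrix.diagonal (sqp π)) * R * Matrix.diagonal (fun x => (sqp π x)⁻¹) by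
      simp only [Matrix.mul_assoc], hDE]
    rw [Matrix.mul_one, pow_succ]
    simp only [Matrix.mul_assoc]

lemma autocov_eq (R : Matrix (Fin n) (Fin n) ℝ) (f : Fin n → ℝ) (k : ℕ) :
    autocov π R f k = gbar π f ⬝ᵥ (((Smat π R) ^ k) *ᵥ gbar π f) := by
  rw [Smat_pow hπpos]
  simp only [dotProduct, Matrix.mulVec, autocov, gbar, sandwich_apply]
  apply Finset.sum_congr rfl
  rintro x -
  rw [Finset.mul_sum]
  apply Finset.sum_congr rfl
  rintro y -
  have hx2 := sqp_sq hπpos x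
  have hy : (sqp π y)⁻¹ * sqp π y = 1 := inv_mul_cancel₀ (sqp_pos hπpos y).ne'
  rw [show sqp π x * (f x - ∑ z, π z * f z) *
      (sqp π x * (R ^ k) x y * (sqp π y)⁻¹ * (sqp π y * (f y - ∑ z, π z * f z)))
      = (sqp π x * sqp π x) * (f x - ∑ z, π z * f z) * (R ^ k) x y *
        (((sqp π y)⁻¹ * sqp π y) * (f y - ∑ z, π z * f z)) from by ring, hx2, hy, one_mul]

lemma eig_transfer {R : Matrix (Fin n) (Fin n) ℝ} {u : Fin n → ℝ} {lam : ℝ}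
    (hu : Smat π R *ᵥ u = lam • u) :
    R *ᵥ (fun y => (sqp π y)⁻¹ * u y) = lam • (fun y => (sqp π y)⁻¹ * u y) := by
  funext x
  have h := congrFun hu x
  simp only [Matrix.mulVec, dotProduct, Pi.smul_apply, smul_eq_mul, Smat, sandwich_apply] at h ⊢
  have hx := (sqp_pos hπpos x).ne'
  have key : ∑ y, R x y * ((sqp π y)⁻¹ * u y)
      = (sqp π x)⁻¹ * ∑ y, sqp π x * R x y * (sqp π y)⁻¹ * u y := by
    rw [Finset.mul_sum]
    apply Finset.sum_congr rfl
    rintro y -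
    have hx1 : (sqp π x)⁻¹ * sqp π x = 1 := inv_mul_cancel₀ hx
    linear_combination (-(R x y * (sqp π y)⁻¹ * u y)) * hx1
  rw [key, h]
  ring

end

lemma Tsum_step (lam : ℝ) (N : ℕ) :
    Tsum lam (N + 1) = Tsum lam N + 2 * ∑ j ∈ Finset.range N, lam ^ (j + 1) + 1 := by
  have hre : ∑ j ∈ Finset.range N, lam ^ (N - j) = ∑ j ∈ Finset.range N, lam ^ (j + 1) := by
    rw [← Finset.sum_range_reflect (fun j => lam ^ (j + 1)) N]
    apply Finset.sum_congr rfl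
    intro j hj
    rw [Finset.mem_range] at hj
    congr 1
    omega
  unfold Tsum
  rw [Finset.sum_range_succ]
  have h1 : ∀ i ∈ Finset.range N, ∑ j ∈ Finset.range (N+1), lam ^ (max i j - min i j)
      = (∑ j ∈ Finset.range N, lam ^ (max i j - min i j)) + lam ^ (N - i) := by
    intro i hi
    rw [Finset.mem_range] at hi
    rw [Finset.sum_range_succ]
    congr 2
    rw [max_eq_right hi.le, min_eq_left hi.le]
  rw [Finset.sum_congr rfl h1, Finset.sum_add_distrib, Finset.sum_range_succ]
  have h2 : ∀ j ∈ Finset.range N, lam ^ (max N j - min N j) = lam ^ (N - j) := by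
    intro j hj
    rw [Finset.mem_range] at hj
    congr 1
    rw [max_eq_left hj.le, min_eq_right hj.le]
  rw [Finset.sum_congr rfl h2, hre]
  simp
  ring

lemma Tsum_closed {lam : ℝ} (hne : lam ≠ 1) (N : ℕ) :
    Tsum lam N = (1 + lam) / (1 - lam) * N - 2 * lam * (1 - lam ^ N) / (1 - lam) ^ 2 := by
  have h1 : (1:ℝ) - lam ≠ 0 := sub_ne_zero.2 (Ne.symm hne)
  induction N with
  | zero => simp [Tsum]
  | succ N ih =>
    rw [Tsum_step, ih]
    have hgeo : ∑ j ∈ Finset.range N, lam ^ (j + 1) = lam * ((lam ^ N - 1) / (lam - 1)) := by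
      rw [← geom_sum_eq hne N, Finset.mul_sum]
      exact Finset.sum_congr rfl fun j _ => by ring
    rw [hgeo]
    have h1' : lam - 1 ≠ 0 := sub_ne_zero.2 hne
    push_cast
    field_simp
    ring

lemma Tsum_tendsto {lam : ℝ} (h1 : -1 ≤ lam) (h2 : lam < 1) :
    Tendsto (fun N : ℕ => (N:ℝ)⁻¹ * Tsum lam N) atTop (nhds ((1 + lam) / (1 - lam))) := by
  have hne : (1:ℝ) - lam ≠ 0 := sub_ne_zero.2 (ne_of_gt (by linarith))
  have hb : Tendsto (fun N : ℕ => (2 * lam * (1 - lam ^ N) / (1 - lam) ^ 2) * (N:ℝ)⁻¹)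
      atTop (nhds 0) := by
    apply squeeze_zero_norm (a := fun N : ℕ => (4 / (1 - lam) ^ 2) * (N:ℝ)⁻¹)
    · intro N
      rw [norm_mul, Real.norm_eq_abs, Real.norm_eq_abs, abs_inv, Nat.abs_cast]
      have hl : |lam| ≤ 1 := abs_le.2 ⟨h1, h2.le⟩
      have hpn : |lam ^ N| ≤ 1 := by
        rw [abs_pow]; exact pow_le_one₀ (abs_nonneg _) hl
      have hnum : |2 * lam * (1 - lam ^ N)| ≤ 4 := by
        rw [abs_mul, abs_mul, abs_two]
        have h3 : |1 - lam ^ N| ≤ 2 := by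
          calc |1 - lam ^ N| ≤ |(1:ℝ)| + |lam ^ N| := abs_sub _ _
          _ ≤ 2 := by rw [abs_one]; linarith
        nlinarith [abs_nonneg lam, abs_nonneg (1 - lam ^ N)]
      have hden : |2 * lam * (1 - lam ^ N) / (1 - lam) ^ 2| ≤ 4 / (1 - lam) ^ 2 := by
        rw [abs_div, abs_of_nonneg (sq_nonneg (1 - lam))]
        exact div_le_div_of_nonneg_right hnum (by positivity) |>.trans_eq rfl
      exact mul_le_mul_of_nonneg_right hden (by positivity)
    · have : Tendsto (fun N : ℕ => ((N:ℝ))⁻¹) atTop (nhds 0) :=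
        tendsto_inv_atTop_zero.comp tendsto_natCast_atTop_atTop
      simpa using this.const_mul (4 / (1 - lam) ^ 2)
  have hmain : Tendsto (fun N : ℕ => (1 + lam) / (1 - lam)
      - (2 * lam * (1 - lam ^ N) / (1 - lam) ^ 2) * (N:ℝ)⁻¹) atTop
      (nhds ((1 + lam) / (1 - lam))) := by
    simpa using tendsto_const_nhds.sub hb
  apply hmain.congr'
  filter_upwards [eventually_ge_atTop 1] with N hN
  have hN0 : (N:ℝ) ≠ 0 := Nat.cast_ne_zero.2 (by omega)
  rw [Tsum_closed (ne_of_lt h2)]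
  field_simp

lemma spectral_pack (π : Fin n → ℝ) (R : Matrix (Fin n) (Fin n) ℝ)
    (hπpos : ∀ x, 0 < π x) (hrev : IsReversible π R) :
    ∃ (u : Fin n → Fin n → ℝ) (lam : Fin n → ℝ),
      (∀ l, Smat π R *ᵥ u l = lam l • u l) ∧
      (∀ l m, u l ⬝ᵥ u m = if l = m then 1 else 0) ∧
      (∀ (g : Fin n → ℝ) (x : Fin n), ∑ l, (u l ⬝ᵥ g) * u l x = g x) := by
  have hsym := Smat_symm hπpos hrev
  have hS : (Smat π R).IsHermitian := by
    ext x y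
    rw [Matrix.conjTranspose_apply, star_trivial]
    have h := congrFun (congrFun hsym x) y
    rwa [Matrix.transpose_apply] at h
  refine ⟨fun l => ⇑(hS.eigenvectorBasis l), hS.eigenvalues, hS.mulVec_eigenvectorBasis, ?_, ?_⟩
  · intro l m
    have h := hS.eigenvectorBasis.orthonormal
    rw [orthonormal_iff_ite] at h
    have h2 := h l m
    rw [← h2]
    simp [PiLp.inner_apply, dotProduct, mul_comm]
  · intro g x
    have h := hS.eigenvectorBasis.sum_repr (WithLp.toLp 2 g : EuclideanSpace ℝ (Fin n))
    simp_rw [hS.eigenvectorBasis.repr_apply_apply] at h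
    have h2 : ∑ j, ((inner ℝ (hS.eigenvectorBasis j) (WithLp.toLp 2 g : EuclideanSpace ℝ (Fin n)) : ℝ))
        • (⇑(hS.eigenvectorBasis j) : Fin n → ℝ) = g := by
      have h' := congrArg WithLp.ofLp h
      simpa [WithLp.ofLp_sum] using h'
    have h3 := congrFun h2 x
    simp only [Finset.sum_apply, Pi.smul_apply, smul_eq_mul] at h3
    rw [← h3]
    simp [PiLp.inner_apply, dotProduct, mul_comm]


lemma dot_symm_mulVec {A : Matrix (Fin n) (Fin n) ℝ} (hA : Aᵀ = A) (v w : Fin n → ℝ) :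
    v ⬝ᵥ (A *ᵥ w) = (A *ᵥ v) ⬝ᵥ w := by
  rw [Matrix.dotProduct_mulVec, ← Matrix.mulVec_transpose, hA]

theorem spec (π : Fin n → ℝ) (R : Matrix (Fin n) (Fin n) ℝ)
    (hπpos : ∀ x, 0 < π x) (hπsum : ∑ x, π x = 1)
    (hR : IsStochastic R) (hirr : MatIrreducible R) (hrev : IsReversible π R) :
    ∃ NN : Matrix (Fin n) (Fin n) ℝ,
      NNᵀ = NN ∧
      (∀ v, Mmat π R *ᵥ (NN *ᵥ v) = v) ∧
      (∀ v, NN *ᵥ (Mmat π R *ᵥ v) = v) ∧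
      (∀ v : Fin n → ℝ, 0 ≤ v ⬝ᵥ (NN *ᵥ v)) ∧
      (∀ f : Fin n → ℝ, Tendsto (varN π R f) atTop
        (nhds (-(gbar π f ⬝ᵥ gbar π f) + 2 * (gbar π f ⬝ᵥ (NN *ᵥ gbar π f))))) := by
  obtain ⟨u, lam, H1, H2, H3⟩ := spectral_pack π R hπpos hrev
  have hne : Nonempty (Fin n) := by
    by_contra h
    rw [not_nonempty_iff] at h
    rw [Finset.univ_eq_empty, Finset.sum_empty] at hπsum
    norm_num at hπsum
  have hsym := Smat_symm hπpos hrev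
  have hw : sqp π ⬝ᵥ sqp π = 1 := by
    rw [dotProduct]
    rw [Finset.sum_congr rfl fun x _ => sqp_sq hπpos x]
    exact hπsum
  have hSw : Smat π R *ᵥ sqp π = sqp π := by
    funext x
    show ∑ y, Smat π R x y * sqp π y = sqp π x
    have h1 : ∀ y, Smat π R x y * sqp π y = sqp π x * R x y := by
      intro y
      rw [Smat, sandwich_apply]
      have : (sqp π y)⁻¹ * sqp π y = 1 := inv_mul_cancel₀ (sqp_pos hπpos y).ne'
      linear_combination (sqp π x * R x y) * this
    rw [Finset.sum_congr rfl fun y _ => h1 y, ← Finset.mul_sum, hR.2, mul_one]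
  have hunorm : ∀ l, u l ⬝ᵥ u l = 1 := fun l => by simpa using H2 l l
  have hu0 : ∀ l, u l ≠ 0 := by
    intro l hl
    have := hunorm l
    rw [hl] at this
    simp [dotProduct] at this
  have hbound : ∀ l, -1 ≤ lam l ∧ lam l ≤ 1 := by
    intro l
    have htr := eig_transfer hπpos (H1 l)
    have hv0 : (fun y => (sqp π y)⁻¹ * u l y) ≠ 0 := by
      intro hz
      apply hu0 l
      funext y
      have h := congrFun hz y
      simp only [Pi.zero_apply] at h
      rcases mul_eq_zero.1 h with h' | h'
      · exact absurd h' (inv_ne_zero (sqp_pos hπpos y).ne')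
      · exact h'
    exact abs_le.1 (eig_bound hR htr hv0)
  have hsimp : ∀ v : Fin n → ℝ, Smat π R *ᵥ v = v → ∃ c : ℝ, v = c • sqp π := by
    intro v hv
    have htr := eig_transfer hπpos (R := R) (u := v) (lam := 1) (by rwa [one_smul])
    rw [one_smul] at htr
    have hconst := fixed_const hR hirr htr
    set x0 : Fin n := Classical.arbitrary (Fin n)
    refine ⟨(sqp π x0)⁻¹ * v x0, funext fun x => ?_⟩
    have h := hconst x x0
    have hx : sqp π x ≠ 0 := (sqp_pos hπpos x).ne'
    have : v x = sqp π x * ((sqp π x)⁻¹ * v x) := by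
      field_simp
    rw [this, h]
    simp [Pi.smul_apply, smul_eq_mul]
    ring
  have horth : ∀ l, lam l ≠ 1 → sqp π ⬝ᵥ u l = 0 := by
    intro l hl
    have h1 : sqp π ⬝ᵥ (Smat π R *ᵥ u l) = lam l * (sqp π ⬝ᵥ u l) := by
      rw [H1 l, dotProduct_smul, smul_eq_mul]
    have h2 : sqp π ⬝ᵥ (Smat π R *ᵥ u l) = sqp π ⬝ᵥ u l := by
      rw [dot_symm_mulVec hsym, hSw]
    have h3 : (lam l - 1) * (sqp π ⬝ᵥ u l) = 0 := by
      rw [sub_mul, one_mul, ← h1, h2, sub_self]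
    rcases mul_eq_zero.1 h3 with h | h
    · exact absurd (by linarith [sub_eq_zero.1 h]) hl
    · exact h
  have hul1 : ∀ l, lam l = 1 → ∃ c : ℝ, u l = c • sqp π := by
    intro l hl
    apply hsimp
    rw [H1 l, hl, one_smul]
  have hc0 : ∀ (l : Fin n) (g : Fin n → ℝ), lam l = 1 → sqp π ⬝ᵥ g = 0 → u l ⬝ᵥ g = 0 := by
    intro l g hl hg
    obtain ⟨c, hc⟩ := hul1 l hl
    rw [hc, smul_dotProduct, hg, smul_zero]
  set nu : Fin n → ℝ := fun l => if lam l = 1 then 1 else 1 - lam l with hnu_def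
  have hnu_pos : ∀ l, 0 < nu l := by
    intro l
    by_cases h : lam l = 1
    · simp [hnu_def, h]
    · have h2 : lam l < 1 := lt_of_le_of_ne (hbound l).2 h
      simp only [hnu_def, if_neg h]
      linarith
  have hnu_ne : ∀ l, nu l ≠ 0 := fun l => (hnu_pos l).ne'
  set NN : Matrix (Fin n) (Fin n) ℝ := ∑ l, (nu l)⁻¹ • vecMulVec (u l) (u l) with hNN_def
  have hNNapp : ∀ x y, NN x y = ∑ l, (nu l)⁻¹ * (u l x * u l y) := by
    intro x y
    rw [hNN_def]
    simp [Matrix.sum_apply, Matrix.smul_apply, Matrix.vecMulVec_apply, smul_eq_mul]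
  have hNv : ∀ (v : Fin n → ℝ) (x : Fin n),
      (NN *ᵥ v) x = ∑ l, (nu l)⁻¹ * (u l ⬝ᵥ v) * u l x := by
    intro v x
    calc (NN *ᵥ v) x = ∑ y, NN x y * v y := rfl
    _ = ∑ y, (∑ l, (nu l)⁻¹ * (u l x * u l y)) * v y := by
          apply Finset.sum_congr rfl; rintro y -; rw [hNNapp]
    _ = ∑ y, ∑ l, (nu l)⁻¹ * (u l x * u l y) * v y := by
          apply Finset.sum_congr rfl; rintro y -; rw [Finset.sum_mul]
    _ = ∑ l, ∑ y, (nu l)⁻¹ * (u l x * u l y) * v y := Finset.sum_comm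
    _ = ∑ l, (nu l)⁻¹ * (u l ⬝ᵥ v) * u l x := by
          apply Finset.sum_congr rfl; rintro l -
          rw [dotProduct, Finset.mul_sum, Finset.sum_mul]
          apply Finset.sum_congr rfl; rintro y -; ring
  have hMv : ∀ v : Fin n → ℝ,
      Mmat π R *ᵥ v = v - Smat π R *ᵥ v + (sqp π ⬝ᵥ v) • sqp π := by
    intro v
    rw [Mmat, Matrix.add_mulVec, Matrix.sub_mulVec, Matrix.one_mulVec]
    congr 1
    funext x
    calc (vecMulVec (sqp π) (sqp π) *ᵥ v) x = ∑ y, vecMulVec (sqp π) (sqp π) x y * v y := rfl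
    _ = ∑ y, sqp π x * (sqp π y * v y) := by
          apply Finset.sum_congr rfl; rintro y -
          rw [Matrix.vecMulVec_apply]; ring
    _ = sqp π x * ∑ y, sqp π y * v y := by rw [Finset.mul_sum]
    _ = ((sqp π ⬝ᵥ v) • sqp π) x := by
          rw [Pi.smul_apply, smul_eq_mul, dotProduct]; ring
  have hMu : ∀ l, Mmat π R *ᵥ u l = nu l • u l := by
    intro l
    rw [hMv, H1 l]
    by_cases h : lam l = 1
    · obtain ⟨c, hc⟩ := hul1 l h
      have hnul : nu l = 1 := by simp [hnu_def, h]
      rw [h, one_smul, hnul, one_smul, hc, dotProduct_smul, hw, smul_eq_mul, mul_one]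
      abel
    · have hnul : nu l = 1 - lam l := by simp [hnu_def, h]
      rw [horth l h, zero_smul, add_zero, hnul, sub_smul, one_smul]
  have hMsym : (Mmat π R)ᵀ = Mmat π R := by
    rw [Mmat, Matrix.transpose_add, Matrix.transpose_sub, Matrix.transpose_one, hsym]
    congr 1
    ext x y
    rw [Matrix.transpose_apply, Matrix.vecMulVec_apply, Matrix.vecMulVec_apply, mul_comm]
  have hMN : ∀ v, Mmat π R *ᵥ (NN *ᵥ v) = v := by
    intro v; funext x
    calc (Mmat π R *ᵥ (NN *ᵥ v)) x
        = ∑ y, Mmat π R x y * (NN *ᵥ v) y := rfl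
    _ = ∑ y, Mmat π R x y * ∑ l, (nu l)⁻¹ * (u l ⬝ᵥ v) * u l y := by
          apply Finset.sum_congr rfl; rintro y -; rw [hNv v y]
    _ = ∑ y, ∑ l, Mmat π R x y * ((nu l)⁻¹ * (u l ⬝ᵥ v) * u l y) := by
          apply Finset.sum_congr rfl; rintro y -; rw [Finset.mul_sum]
    _ = ∑ l, ∑ y, Mmat π R x y * ((nu l)⁻¹ * (u l ⬝ᵥ v) * u l y) := Finset.sum_comm
    _ = ∑ l, (nu l)⁻¹ * (u l ⬝ᵥ v) * (nu l * u l x) := by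
          apply Finset.sum_congr rfl; rintro l -
          have h2 : ∑ y, Mmat π R x y * u l y = nu l * u l x := by
            have h3 := congrFun (hMu l) x
            simpa [Matrix.mulVec, dotProduct, Pi.smul_apply, smul_eq_mul] using h3
          calc ∑ y, Mmat π R x y * ((nu l)⁻¹ * (u l ⬝ᵥ v) * u l y)
              = (nu l)⁻¹ * (u l ⬝ᵥ v) * ∑ y, Mmat π R x y * u l y := by
                rw [Finset.mul_sum]; apply Finset.sum_congr rfl; rintro y -; ring
          _ = (nu l)⁻¹ * (u l ⬝ᵥ v) * (nu l * u l x) := by rw [h2]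
    _ = ∑ l, (u l ⬝ᵥ v) * u l x := by
          apply Finset.sum_congr rfl; rintro l -
          have hinv : (nu l)⁻¹ * nu l = 1 := inv_mul_cancel₀ (hnu_ne l)
          linear_combination ((u l ⬝ᵥ v) * u l x) * hinv
    _ = v x := H3 v x
  have hNM : ∀ v, NN *ᵥ (Mmat π R *ᵥ v) = v := by
    intro v; funext x
    rw [hNv]
    have hdot : ∀ l, u l ⬝ᵥ (Mmat π R *ᵥ v) = nu l * (u l ⬝ᵥ v) := by
      intro l
      rw [dot_symm_mulVec hMsym, hMu l, smul_dotProduct, smul_eq_mul]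
    calc ∑ l, (nu l)⁻¹ * (u l ⬝ᵥ (Mmat π R *ᵥ v)) * u l x
        = ∑ l, (u l ⬝ᵥ v) * u l x := by
          apply Finset.sum_congr rfl; rintro l -
          rw [hdot l]
          have hinv : (nu l)⁻¹ * nu l = 1 := inv_mul_cancel₀ (hnu_ne l)
          linear_combination ((u l ⬝ᵥ v) * u l x) * hinv
    _ = v x := H3 v x
  have hNsym : NNᵀ = NN := by
    ext x y
    rw [Matrix.transpose_apply, hNNapp, hNNapp]
    apply Finset.sum_congr rfl; rintro l -; ring
  have hNform : ∀ g : Fin n → ℝ, g ⬝ᵥ (NN *ᵥ g) = ∑ l, (nu l)⁻¹ * (u l ⬝ᵥ g)^2 := by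
    intro g
    calc g ⬝ᵥ (NN *ᵥ g) = ∑ x, g x * (NN *ᵥ g) x := rfl
    _ = ∑ x, g x * ∑ l, (nu l)⁻¹ * (u l ⬝ᵥ g) * u l x := by
          apply Finset.sum_congr rfl; rintro x -; rw [hNv]
    _ = ∑ x, ∑ l, g x * ((nu l)⁻¹ * (u l ⬝ᵥ g) * u l x) := by
          apply Finset.sum_congr rfl; rintro x -; rw [Finset.mul_sum]
    _ = ∑ l, ∑ x, g x * ((nu l)⁻¹ * (u l ⬝ᵥ g) * u l x) := Finset.sum_comm
    _ = ∑ l, (nu l)⁻¹ * (u l ⬝ᵥ g)^2 := by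
          apply Finset.sum_congr rfl; rintro l -
          have h4 : ∑ x, g x * ((nu l)⁻¹ * (u l ⬝ᵥ g) * u l x)
              = (nu l)⁻¹ * (u l ⬝ᵥ g) * ∑ x, u l x * g x := by
            rw [Finset.mul_sum]; apply Finset.sum_congr rfl; rintro x -; ring
          rw [h4, show ∑ x, u l x * g x = u l ⬝ᵥ g from rfl]; ring
  have hPar : ∀ g : Fin n → ℝ, g ⬝ᵥ g = ∑ l, (u l ⬝ᵥ g)^2 := by
    intro g
    calc g ⬝ᵥ g = ∑ x, g x * g x := rfl
    _ = ∑ x, (∑ l, (u l ⬝ᵥ g) * u l x) * g x := by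
          apply Finset.sum_congr rfl; rintro x -; rw [H3 g x]
    _ = ∑ x, ∑ l, (u l ⬝ᵥ g) * u l x * g x := by
          apply Finset.sum_congr rfl; rintro x -; rw [Finset.sum_mul]
    _ = ∑ l, ∑ x, (u l ⬝ᵥ g) * u l x * g x := Finset.sum_comm
    _ = ∑ l, (u l ⬝ᵥ g)^2 := by
          apply Finset.sum_congr rfl; rintro l -
          have h4 : ∑ x, (u l ⬝ᵥ g) * u l x * g x = (u l ⬝ᵥ g) * ∑ x, u l x * g x := by
            rw [Finset.mul_sum]; apply Finset.sum_congr rfl; rintro x -; ring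
          rw [h4, show ∑ x, u l x * g x = u l ⬝ᵥ g from rfl]; ring
  have hSkp : ∀ (k : ℕ) (l : Fin n), (Smat π R ^ k) *ᵥ u l = (lam l ^ k) • u l := by
    intro k l
    induction k with
    | zero => simp
    | succ k ih =>
      rw [pow_succ, ← Matrix.mulVec_mulVec, H1 l, Matrix.mulVec_smul, ih, smul_smul, pow_succ,
        mul_comm]
  have hSform : ∀ (g : Fin n → ℝ) (k : ℕ),
      g ⬝ᵥ ((Smat π R ^ k) *ᵥ g) = ∑ l, (u l ⬝ᵥ g)^2 * lam l ^ k := by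
    intro g k
    have hgx : ∀ x, ((Smat π R ^ k) *ᵥ g) x = ∑ l, (u l ⬝ᵥ g) * (lam l ^ k * u l x) := by
      intro x
      calc ((Smat π R ^ k) *ᵥ g) x = ∑ y, (Smat π R ^ k) x y * g y := rfl
      _ = ∑ y, (Smat π R ^ k) x y * ∑ l, (u l ⬝ᵥ g) * u l y := by
            apply Finset.sum_congr rfl; rintro y -; rw [H3 g y]
      _ = ∑ y, ∑ l, (Smat π R ^ k) x y * ((u l ⬝ᵥ g) * u l y) := by
            apply Finset.sum_congr rfl; rintro y -; rw [Finset.mul_sum]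
      _ = ∑ l, ∑ y, (Smat π R ^ k) x y * ((u l ⬝ᵥ g) * u l y) := Finset.sum_comm
      _ = ∑ l, (u l ⬝ᵥ g) * (lam l ^ k * u l x) := by
            apply Finset.sum_congr rfl; rintro l -
            have h2 : ∑ y, (Smat π R ^ k) x y * u l y = lam l ^ k * u l x := by
              have h3 := congrFun (hSkp k l) x
              simpa [Matrix.mulVec, dotProduct, Pi.smul_apply, smul_eq_mul] using h3
            calc ∑ y, (Smat π R ^ k) x y * ((u l ⬝ᵥ g) * u l y)
                = (u l ⬝ᵥ g) * ∑ y, (Smat π R ^ k) x y * u l y := by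
                  rw [Finset.mul_sum]; apply Finset.sum_congr rfl; rintro y -; ring
            _ = (u l ⬝ᵥ g) * (lam l ^ k * u l x) := by rw [h2]
    calc g ⬝ᵥ ((Smat π R ^ k) *ᵥ g) = ∑ x, g x * ((Smat π R ^ k) *ᵥ g) x := rfl
    _ = ∑ x, g x * ∑ l, (u l ⬝ᵥ g) * (lam l ^ k * u l x) := by
          apply Finset.sum_congr rfl; rintro x -; rw [hgx]
    _ = ∑ x, ∑ l, g x * ((u l ⬝ᵥ g) * (lam l ^ k * u l x)) := by
          apply Finset.sum_congr rfl; rintro x -; rw [Finset.mul_sum]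
    _ = ∑ l, ∑ x, g x * ((u l ⬝ᵥ g) * (lam l ^ k * u l x)) := Finset.sum_comm
    _ = ∑ l, (u l ⬝ᵥ g)^2 * lam l ^ k := by
          apply Finset.sum_congr rfl; rintro l -
          have h4 : ∑ x, g x * ((u l ⬝ᵥ g) * (lam l ^ k * u l x))
              = (u l ⬝ᵥ g) * lam l ^ k * ∑ x, u l x * g x := by
            rw [Finset.mul_sum]; apply Finset.sum_congr rfl; rintro x -; ring
          rw [h4, show ∑ x, u l x * g x = u l ⬝ᵥ g from rfl]; ring
  refine ⟨NN, hNsym, hMN, hNM, ?_, ?_⟩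
  · intro v
    rw [hNform v]
    exact Finset.sum_nonneg fun l _ => mul_nonneg (inv_nonneg.2 (hnu_pos l).le) (sq_nonneg _)
  · intro f
    have hgw : sqp π ⬝ᵥ gbar π f = 0 := by
      have h1 : ∀ x, sqp π x * gbar π f x = π x * (f x - ∑ z, π z * f z) := by
        intro x
        simp only [gbar]
        rw [← mul_assoc, sqp_sq hπpos]
      rw [dotProduct, Finset.sum_congr rfl fun x _ => h1 x]
      simp_rw [mul_sub]
      rw [Finset.sum_sub_distrib, ← Finset.sum_mul, hπsum, one_mul, sub_self]
    have hauto : ∀ k, autocov π R f k = ∑ l, (u l ⬝ᵥ gbar π f)^2 * lam l ^ k := by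
      intro k
      rw [autocov_eq hπpos, hSform]
    have hvarN : ∀ N : ℕ, varN π R f N
        = ∑ l, (u l ⬝ᵥ gbar π f)^2 * ((N:ℝ)⁻¹ * Tsum (lam l) N) := by
      intro N
      simp only [varN]
      rw [Finset.sum_congr rfl fun i _ => Finset.sum_congr rfl fun j _ => hauto _]
      rw [show ∑ i ∈ Finset.range N, ∑ j ∈ Finset.range N,
          ∑ l, (u l ⬝ᵥ gbar π f)^2 * lam l ^ (max i j - min i j)
          = ∑ l, (u l ⬝ᵥ gbar π f)^2 * Tsum (lam l) N from ?_]
      · rw [Finset.mul_sum]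
        apply Finset.sum_congr rfl; rintro l -; ring
      · rw [Finset.sum_congr rfl fun i (_ : i ∈ Finset.range N) => Finset.sum_comm]
        rw [Finset.sum_comm]
        apply Finset.sum_congr rfl; rintro l -
        rw [Tsum, Finset.mul_sum]
        apply Finset.sum_congr rfl; rintro i -
        rw [Finset.mul_sum]
    have hperl : ∀ l : Fin n, Tendsto
        (fun N : ℕ => (u l ⬝ᵥ gbar π f)^2 * ((N:ℝ)⁻¹ * Tsum (lam l) N)) atTop
        (nhds (if lam l = 1 then 0
          else (u l ⬝ᵥ gbar π f)^2 * ((1 + lam l)/(1 - lam l)))) := by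
      intro l
      by_cases h : lam l = 1
      · have hc := hc0 l (gbar π f) h hgw
        rw [if_pos h]
        have hz : (fun N : ℕ => (u l ⬝ᵥ gbar π f)^2 * ((N:ℝ)⁻¹ * Tsum (lam l) N))
            = fun _ => (0:ℝ) := by
          funext N; rw [hc]; ring
        rw [hz]
        exact tendsto_const_nhds
      · rw [if_neg h]
        exact (Tsum_tendsto (hbound l).1 (lt_of_le_of_ne (hbound l).2 h)).const_mul _
    have hsum := tendsto_finset_sum Finset.univ (fun l (_ : l ∈ Finset.univ) => hperl l)
    have hval : ∑ l, (if lam l = 1 then 0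
          else (u l ⬝ᵥ gbar π f)^2 * ((1 + lam l)/(1 - lam l)))
        = -(gbar π f ⬝ᵥ gbar π f) + 2 * (gbar π f ⬝ᵥ (NN *ᵥ gbar π f)) := by
      rw [hPar, hNform, Finset.mul_sum, ← Finset.sum_neg_distrib, ← Finset.sum_add_distrib]
      apply Finset.sum_congr rfl; rintro l -
      by_cases h : lam l = 1
      · have hc := hc0 l (gbar π f) h hgw
        rw [if_pos h, hc]
        ring
      · have hnul : nu l = 1 - lam l := by simp [hnu_def, h]
        have h1 : 1 - lam l ≠ 0 := by
          intro hz
          exact h (by linarith)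
        rw [if_neg h, hnul]
        field_simp
        ring
    rw [hval] at hsum
    exact hsum.congr fun N => (hvarN N).symm


/-- Cauchy-Schwarz for a PSD symmetric bilinear form -/
lemma cs_psd {Y : Matrix (Fin n) (Fin n) ℝ} (hsym : Yᵀ = Y)
    (hpsd : ∀ v : Fin n → ℝ, 0 ≤ v ⬝ᵥ (Y *ᵥ v)) (v a : Fin n → ℝ) :
    (v ⬝ᵥ (Y *ᵥ a))^2 ≤ (v ⬝ᵥ (Y *ᵥ v)) * (a ⬝ᵥ (Y *ᵥ a)) := by
  have hq : ∀ t : ℝ, 0 ≤ (a ⬝ᵥ (Y *ᵥ a)) * (t * t) + (2 * (v ⬝ᵥ (Y *ᵥ a))) * t + (v ⬝ᵥ (Y *ᵥ v)) := by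
    intro t
    have h := hpsd (v + t • a)
    have hcross : a ⬝ᵥ (Y *ᵥ v) = v ⬝ᵥ (Y *ᵥ a) := by
      rw [dot_symm_mulVec hsym, dotProduct_comm]
    have hexp : (v + t • a) ⬝ᵥ (Y *ᵥ (v + t • a))
        = (a ⬝ᵥ (Y *ᵥ a)) * (t * t) + (2 * (v ⬝ᵥ (Y *ᵥ a))) * t + (v ⬝ᵥ (Y *ᵥ v)) := by
      simp only [Matrix.mulVec_add, Matrix.mulVec_smul, dotProduct_add, add_dotProduct,
        dotProduct_smul, smul_dotProduct, smul_eq_mul, hcross]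
      ring
    rw [hexp] at h
    exact h
  have hd := discrim_le_zero hq
  rw [discrim] at hd
  nlinarith [hd]

/-- the key Loewner comparison via inverses -/
lemma loewner {MP MQ NP NQ : Matrix (Fin n) (Fin n) ℝ}
    (hMQsym : MQᵀ = MQ)
    (hNPsym : NPᵀ = NP) (hNQsym : NQᵀ = NQ)
    (hMNP : ∀ v, MP *ᵥ (NP *ᵥ v) = v) (hNMP : ∀ v, NP *ᵥ (MP *ᵥ v) = v)
    (hMNQ : ∀ v, MQ *ᵥ (NQ *ᵥ v) = v) (hNMQ : ∀ v, NQ *ᵥ (MQ *ᵥ v) = v)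
    (hNPpsd : ∀ v : Fin n → ℝ, 0 ≤ v ⬝ᵥ (NP *ᵥ v))
    (hNQpsd : ∀ v : Fin n → ℝ, 0 ≤ v ⬝ᵥ (NQ *ᵥ v))
    (hle : ∀ v : Fin n → ℝ, v ⬝ᵥ (NQ *ᵥ v) ≤ v ⬝ᵥ (NP *ᵥ v)) :
    ∀ v : Fin n → ℝ, v ⬝ᵥ (MP *ᵥ v) ≤ v ⬝ᵥ (MQ *ᵥ v) := by
  have hMpsd : ∀ (M N : Matrix (Fin n) (Fin n) ℝ), (∀ w, N *ᵥ (M *ᵥ w) = w) →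
      (∀ w : Fin n → ℝ, 0 ≤ w ⬝ᵥ (N *ᵥ w)) → ∀ w : Fin n → ℝ, 0 ≤ w ⬝ᵥ (M *ᵥ w) := by
    intro M N hNM hNpsd w
    have h1 : w ⬝ᵥ (M *ᵥ w) = (M *ᵥ w) ⬝ᵥ (N *ᵥ (M *ᵥ w)) := by
      rw [hNM w, dotProduct_comm]
    rw [h1]
    exact hNpsd _
  have hMQpsd := hMpsd MQ NQ hNMQ hNQpsd
  have hMPpsd := hMpsd MP NP hNMP hNPpsd
  intro v
  set z : Fin n → ℝ := MP *ᵥ v with hz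
  set t : ℝ := v ⬝ᵥ (MP *ᵥ v) with ht
  have ht0 : 0 ≤ t := hMPpsd v
  have hcs := cs_psd hMQsym hMQpsd v (NQ *ᵥ z)
  have h1 : MQ *ᵥ (NQ *ᵥ z) = z := hMNQ z
  rw [h1] at hcs
  -- hcs : (v ⬝ᵥ z)^2 ≤ (v ⬝ᵥ MQ v) * ((NQ z) ⬝ᵥ z)
  have h2 : v ⬝ᵥ z = t := ht
  have h3 : (NQ *ᵥ z) ⬝ᵥ z = z ⬝ᵥ (NQ *ᵥ z) := dotProduct_comm _ _
  have h4 : z ⬝ᵥ (NQ *ᵥ z) ≤ z ⬝ᵥ (NP *ᵥ z) := hle z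
  have h5 : z ⬝ᵥ (NP *ᵥ z) = t := by
    rw [hz, hNMP v, ht, dotProduct_comm]
  have h6 : t^2 ≤ (v ⬝ᵥ (MQ *ᵥ v)) * t := by
    calc t^2 = (v ⬝ᵥ z)^2 := by rw [h2]
    _ ≤ (v ⬝ᵥ (MQ *ᵥ v)) * ((NQ *ᵥ z) ⬝ᵥ z) := hcs
    _ ≤ (v ⬝ᵥ (MQ *ᵥ v)) * t := by
        apply mul_le_mul_of_nonneg_left _ (hMQpsd v)
        rw [h3]
        calc z ⬝ᵥ (NQ *ᵥ z) ≤ z ⬝ᵥ (NP *ᵥ z) := h4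
        _ = t := h5
  rcases eq_or_lt_of_le ht0 with h | h
  · rw [← h]
    exact hMQpsd v
  · nlinarith [h6, h]


lemma wnorm {π : Fin n → ℝ} (hπpos : ∀ x, 0 < π x) (hπsum : ∑ x, π x = 1) :
    sqp π ⬝ᵥ sqp π = 1 := by
  rw [dotProduct, Finset.sum_congr rfl fun x _ => sqp_sq hπpos x]
  exact hπsum

lemma Sw_eq {π : Fin n → ℝ} (hπpos : ∀ x, 0 < π x) {R : Matrix (Fin n) (Fin n) ℝ}
    (hR : IsStochastic R) : Smat π R *ᵥ sqp π = sqp π := by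
  funext x
  show ∑ y, Smat π R x y * sqp π y = sqp π x
  have h1 : ∀ y, Smat π R x y * sqp π y = sqp π x * R x y := by
    intro y
    rw [Smat, sandwich_apply]
    have h2 : (sqp π y)⁻¹ * sqp π y = 1 := inv_mul_cancel₀ (sqp_pos hπpos y).ne'
    linear_combination (sqp π x * R x y) * h2
  rw [Finset.sum_congr rfl fun y _ => h1 y, ← Finset.mul_sum, hR.2, mul_one]

lemma vecMulVec_act (a b v : Fin n → ℝ) :
    vecMulVec a b *ᵥ v = (b ⬝ᵥ v) • a := by
  funext x
  calc (vecMulVec a b *ᵥ v) x = ∑ y, vecMulVec a b x y * v y := rfl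
  _ = ∑ y, a x * (b y * v y) := by
        apply Finset.sum_congr rfl; rintro y -
        rw [Matrix.vecMulVec_apply]; ring
  _ = a x * ∑ y, b y * v y := by rw [Finset.mul_sum]
  _ = ((b ⬝ᵥ v) • a) x := by rw [Pi.smul_apply, smul_eq_mul, dotProduct]; ring

lemma Mw_eq {π : Fin n → ℝ} (hπpos : ∀ x, 0 < π x) (hπsum : ∑ x, π x = 1)
    {R : Matrix (Fin n) (Fin n) ℝ} (hR : IsStochastic R) :
    Mmat π R *ᵥ sqp π = sqp π := by
  rw [Mmat, Matrix.add_mulVec, Matrix.sub_mulVec, Matrix.one_mulVec, Sw_eq hπpos hR,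
    vecMulVec_act, wnorm hπpos hπsum, sub_self, one_smul, zero_add]

lemma Mmat_symm {π : Fin n → ℝ} (hπpos : ∀ x, 0 < π x) {R : Matrix (Fin n) (Fin n) ℝ}
    (hrev : IsReversible π R) : (Mmat π R)ᵀ = Mmat π R := by
  rw [Mmat, Matrix.transpose_add, Matrix.transpose_sub, Matrix.transpose_one,
    Smat_symm hπpos hrev]
  congr 1
  ext x y
  rw [Matrix.transpose_apply, Matrix.vecMulVec_apply, Matrix.vecMulVec_apply, mul_comm]

lemma single_dot (A : Matrix (Fin n) (Fin n) ℝ) (x y : Fin n) :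
    (Pi.single x 1 : Fin n → ℝ) ⬝ᵥ (A *ᵥ (Pi.single y 1 : Fin n → ℝ)) = A x y := by
  simp [Matrix.mulVec_single, single_dotProduct]

end Stmt17Aux

open Stmt17Aux

theorem stmt17 {n : ℕ} (π : Fin n → ℝ) (P : Matrix (Fin n) (Fin n) ℝ)
    (hπpos : ∀ x, 0 < π x) (hπsum : ∑ x, π x = 1)
    (hP : IsStochastic P) (hirr : MatIrreducible P) (hrev : IsReversible π P)
    (pm : ℝ) (hpm : IsGreatest (Set.range π) pm)
    (htr : P.trace = max 0 ((2 * pm - 1) / pm)) :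
    ∀ Q : Matrix (Fin n) (Fin n) ℝ, IsStochastic Q → MatIrreducible Q →
      IsReversible π Q → Q ≠ P → ¬ EffDom π Q P := by
  intro Q hQ hirrQ hrevQ hQneP hEff
  obtain ⟨NP, hNPsym, hMNP, hNMP, hNPpsd, hVarP⟩ := spec π P hπpos hπsum hP hirr hrev
  obtain ⟨NQ, hNQsym, hMNQ, hNMQ, hNQpsd, hVarQ⟩ := spec π Q hπpos hπsum hQ hirrQ hrevQ
  have hw1 : sqp π ⬝ᵥ sqp π = 1 := wnorm hπpos hπsum
  -- step 1: N-form comparison on the orthogonal complement of sqp π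
  have hg_le : ∀ g : Fin n → ℝ, sqp π ⬝ᵥ g = 0 →
      g ⬝ᵥ (NQ *ᵥ g) ≤ g ⬝ᵥ (NP *ᵥ g) := by
    intro g hg
    set f : Fin n → ℝ := fun x => (sqp π x)⁻¹ * g x with hf
    have hmu : ∑ z, π z * f z = 0 := by
      have h1 : ∀ z, π z * f z = sqp π z * g z := by
        intro z
        have h2 := sqp_sq hπpos z
        have h3 : sqp π z ≠ 0 := (sqp_pos hπpos z).ne'
        simp only [hf]
        rw [← h2, mul_assoc, ← mul_assoc (sqp π z) (sqp π z)⁻¹, mul_inv_cancel₀ h3, one_mul]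
      rw [Finset.sum_congr rfl fun z _ => h1 z]
      exact hg
    have hgf : gbar π f = g := by
      funext x
      show sqp π x * (f x - ∑ z, π z * f z) = g x
      rw [hmu, sub_zero, hf, ← mul_assoc, mul_inv_cancel₀ (sqp_pos hπpos x).ne', one_mul]
    have h := hEff f _ _ (hVarQ f) (hVarP f)
    rw [hgf] at h
    linarith
  -- step 2: full-space comparison
  have hNwP : NP *ᵥ sqp π = sqp π := by
    calc NP *ᵥ sqp π = NP *ᵥ (Mmat π P *ᵥ sqp π) := by rw [Mw_eq hπpos hπsum hP]
    _ = sqp π := hNMP _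
  have hNwQ : NQ *ᵥ sqp π = sqp π := by
    calc NQ *ᵥ sqp π = NQ *ᵥ (Mmat π Q *ᵥ sqp π) := by rw [Mw_eq hπpos hπsum hQ]
    _ = sqp π := hNMQ _
  have hNle : ∀ v : Fin n → ℝ, v ⬝ᵥ (NQ *ᵥ v) ≤ v ⬝ᵥ (NP *ᵥ v) := by
    intro v
    set t : ℝ := sqp π ⬝ᵥ v with htdef
    set g : Fin n → ℝ := v - t • sqp π with hgdef
    have hg : sqp π ⬝ᵥ g = 0 := by
      rw [hgdef, dotProduct_sub, dotProduct_smul, hw1, smul_eq_mul, mul_one, htdef, sub_self]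
    have hv : v = g + t • sqp π := by rw [hgdef]; abel
    have hdecomp : ∀ (NR : Matrix (Fin n) (Fin n) ℝ), NRᵀ = NR → NR *ᵥ sqp π = sqp π →
        v ⬝ᵥ (NR *ᵥ v) = g ⬝ᵥ (NR *ᵥ g) + t * t := by
      intro NR hsymR hwR
      have h1 : sqp π ⬝ᵥ (NR *ᵥ g) = 0 := by
        rw [dot_symm_mulVec hsymR, hwR, hg]
      have h2 : g ⬝ᵥ sqp π = 0 := by rw [dotProduct_comm]; exact hg
      calc v ⬝ᵥ (NR *ᵥ v) = (g + t • sqp π) ⬝ᵥ (NR *ᵥ (g + t • sqp π)) := by rw [← hv]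
      _ = g ⬝ᵥ (NR *ᵥ g) + t * t := by
          simp only [Matrix.mulVec_add, Matrix.mulVec_smul, dotProduct_add, add_dotProduct,
            dotProduct_smul, smul_dotProduct, smul_eq_mul, hwR, h1, h2, hw1]
          ring
    rw [hdecomp NQ hNQsym hNwQ, hdecomp NP hNPsym hNwP]
    linarith [hg_le g hg]
  have hMle := loewner (Mmat_symm hπpos hrevQ) hNPsym hNQsym hMNP hNMP hMNQ hNMQ
    hNPpsd hNQpsd hNle
  -- step 3: S-form comparison
  have hSle : ∀ v : Fin n → ℝ, v ⬝ᵥ (Smat π Q *ᵥ v) ≤ v ⬝ᵥ (Smat π P *ᵥ v) := by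
    intro v
    have h := hMle v
    have hexpand : ∀ R : Matrix (Fin n) (Fin n) ℝ, v ⬝ᵥ (Mmat π R *ᵥ v)
        = v ⬝ᵥ v - v ⬝ᵥ (Smat π R *ᵥ v) + v ⬝ᵥ (vecMulVec (sqp π) (sqp π) *ᵥ v) := by
      intro R
      rw [Mmat, Matrix.add_mulVec, Matrix.sub_mulVec, Matrix.one_mulVec, dotProduct_add,
        dotProduct_sub]
    rw [hexpand P, hexpand Q] at h
    linarith
  -- step 4: trace argument
  set A : Matrix (Fin n) (Fin n) ℝ := Smat π P - Smat π Q with hAdef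
  have hApsd : ∀ v : Fin n → ℝ, 0 ≤ v ⬝ᵥ (A *ᵥ v) := by
    intro v
    rw [hAdef, Matrix.sub_mulVec, dotProduct_sub]
    linarith [hSle v]
  have hAsym : Aᵀ = A := by
    rw [hAdef, Matrix.transpose_sub, Smat_symm hπpos hrev, Smat_symm hπpos hrevQ]
  have hdiag_nonneg : ∀ x, 0 ≤ A x x := by
    intro x
    have h := hApsd (Pi.single x 1)
    rwa [single_dot] at h
  have hSdiag : ∀ (R : Matrix (Fin n) (Fin n) ℝ) (x : Fin n), Smat π R x x = R x x := by
    intro R x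
    rw [Smat, sandwich_apply, mul_comm (sqp π x) (R x x), mul_assoc,
      mul_inv_cancel₀ (sqp_pos hπpos x).ne', mul_one]
  have htraceA : ∑ x, A x x = P.trace - Q.trace := by
    have h1 : ∀ x, A x x = P x x - Q x x := by
      intro x
      rw [hAdef, Matrix.sub_apply, hSdiag P x, hSdiag Q x]
    rw [Finset.sum_congr rfl fun x _ => h1 x, Finset.sum_sub_distrib]
    rfl
  -- trace Q lower bound
  obtain ⟨⟨xs, hxs⟩, hub⟩ := hpm
  have hub' : ∀ y, π y ≤ pm := fun y => hub ⟨y, rfl⟩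
  have hpm_pos : 0 < pm := hxs ▸ hπpos xs
  have hQd : (2 * pm - 1) / pm ≤ Q xs xs := by
    have hrow := hQ.2 xs
    have hsplit : Q xs xs + ∑ y ∈ Finset.univ.erase xs, Q xs y = 1 := by
      rw [Finset.add_sum_erase _ _ (Finset.mem_univ xs)]
      exact hrow
    have hπsplit : π xs + ∑ y ∈ Finset.univ.erase xs, π y = 1 := by
      rw [Finset.add_sum_erase _ _ (Finset.mem_univ xs)]
      exact hπsum
    have hbound : ∀ y ∈ Finset.univ.erase xs, π xs * Q xs y ≤ π y := by
      intro y _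
      rw [hrevQ xs y]
      have hq1 : Q y xs ≤ 1 := by
        rw [← hQ.2 y]
        exact Finset.single_le_sum (fun z _ => hQ.1 y z) (Finset.mem_univ xs)
      nlinarith [(hπpos y).le, hQ.1 y xs]
    have hsum_le : π xs * ∑ y ∈ Finset.univ.erase xs, Q xs y
        ≤ ∑ y ∈ Finset.univ.erase xs, π y := by
      rw [Finset.mul_sum]
      exact Finset.sum_le_sum hbound
    have e1 : ∑ y ∈ Finset.univ.erase xs, Q xs y = 1 - Q xs xs := by linarith [hsplit]
    have e2 : ∑ y ∈ Finset.univ.erase xs, π y = 1 - π xs := by linarith [hπsplit]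
    rw [e1, e2] at hsum_le
    rw [div_le_iff₀ hpm_pos, ← hxs]
    nlinarith [hsum_le]
  have htrQ : max 0 ((2 * pm - 1) / pm) ≤ Q.trace := by
    have hQxs : Q xs xs ≤ Q.trace :=
      Finset.single_le_sum (fun z _ => hQ.1 z z) (Finset.mem_univ xs)
    have h0 : (0:ℝ) ≤ Q.trace := Finset.sum_nonneg fun x _ => hQ.1 x x
    exact max_le h0 (le_trans hQd hQxs)
  have hsum0 : ∑ x, A x x = 0 := by
    have hle0 : ∑ x, A x x ≤ 0 := by
      rw [htraceA, htr]
      linarith [htrQ]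
    exact le_antisymm hle0 (Finset.sum_nonneg fun x _ => hdiag_nonneg x)
  have hdiag0 : ∀ x, A x x = 0 := fun x =>
    (Finset.sum_eq_zero_iff_of_nonneg fun z _ => hdiag_nonneg z).1 hsum0 x (Finset.mem_univ x)
  have hA0 : A = 0 := by
    ext x y
    rw [Matrix.zero_apply]
    by_cases hxy : x = y
    · rw [hxy]; exact hdiag0 y
    · have hsym_e : A y x = A x y := by
        have h := congrFun (congrFun hAsym y) x
        rw [Matrix.transpose_apply] at h
        exact h.symm
      have hq : ∀ t : ℝ, 0 ≤ 2 * t * A x y := by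
        intro t
        have h := hApsd ((Pi.single x 1 : Fin n → ℝ) + t • (Pi.single y 1 : Fin n → ℝ))
        have hexp : ((Pi.single x 1 : Fin n → ℝ) + t • (Pi.single y 1 : Fin n → ℝ)) ⬝ᵥ
            (A *ᵥ ((Pi.single x 1 : Fin n → ℝ) + t • (Pi.single y 1 : Fin n → ℝ)))
            = A x x + t * A x y + t * A y x + t * t * A y y := by
          simp only [Matrix.mulVec_add, Matrix.mulVec_smul, dotProduct_add, add_dotProduct,
            dotProduct_smul, smul_dotProduct, smul_eq_mul, single_dot]
          ring
        rw [hexp, hdiag0 x, hdiag0 y, hsym_e] at h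
        linarith
      have h1 := hq 1
      have h2 := hq (-1)
      linarith
  have hSPQ : Smat π P = Smat π Q := sub_eq_zero.1 hA0
  apply hQneP
  ext x y
  have h := congrFun (congrFun hSPQ x) y
  rw [Smat, sandwich_apply, Smat, sandwich_apply] at h
  have hx : sqp π x ≠ 0 := (sqp_pos hπpos x).ne'
  have hy : (sqp π y)⁻¹ ≠ 0 := inv_ne_zero (sqp_pos hπpos y).ne'
  exact (mul_left_cancel₀ hx (mul_right_cancel₀ hy h)).symm
end

section
/- If Z is an n×n real matrix with z_ii ≥ 0, z_ij ≤ 0 for all i ≠ j, and all row sums equal to zero, then every real eigenvalue of Z is non-negative; consequently, if P Peskun-dominates Q (P(x,y) ≥ Q(x,y) for all x≠y) and both are irreducible and reversible with respect to π, then P efficiency-dominates Q. -/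
open Matrix BigOperators Filter

open RealInnerProductSpace in
lemma eigen_spec {n : ℕ} (S : Matrix (Fin n) (Fin n) ℝ) (hS : S.IsHermitian) :
    ∃ (lam : Fin n → ℝ) (u : Fin n → (Fin n → ℝ)),
      (∀ i j, (∑ x, u i x * u j x) = if i = j then 1 else 0) ∧
      (∀ i, S.mulVec (u i) = lam i • u i) ∧
      (∀ y : Fin n → ℝ, ∀ x, y x = ∑ i, (∑ z, u i z * y z) * u i x) := by
  have hinner : ∀ a b : EuclideanSpace ℝ (Fin n), ⟪a, b⟫ = ∑ x, a x * b x := by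
    intro a b
    simp [PiLp.inner_apply, RCLike.inner_apply, mul_comm]
  refine ⟨hS.eigenvalues, fun i => (hS.eigenvectorBasis i : Fin n → ℝ), ?_, ?_, ?_⟩
  · intro i j
    have h := (orthonormal_iff_ite.mp hS.eigenvectorBasis.orthonormal) i j
    rw [hinner] at h
    simpa using h
  · exact hS.mulVec_eigenvectorBasis
  · intro y x
    have h := hS.eigenvectorBasis.sum_repr' (WithLp.toLp 2 y : EuclideanSpace ℝ (Fin n))
    have h2 : ∀ x, (∑ i, (inner ℝ (hS.eigenvectorBasis i) (WithLp.toLp 2 y : EuclideanSpace ℝ (Fin n)) : ℝ) • (hS.eigenvectorBasis i : EuclideanSpace ℝ (Fin n))) x = ∑ i, (inner ℝ (hS.eigenvectorBasis i) (WithLp.toLp 2 y : EuclideanSpace ℝ (Fin n)) : ℝ) * hS.eigenvectorBasis i x := by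
      intro x
      simp
    have h3 := (h2 x).symm.trans (congrArg (fun v : EuclideanSpace ℝ (Fin n) => v x) h)
    refine h3.symm.trans (Finset.sum_congr rfl fun i _ => ?_)
    rw [hinner]

lemma part1 {n : ℕ} (Z : Matrix (Fin n) (Fin n) ℝ)
    (hd : ∀ i, 0 ≤ Z i i) (ho : ∀ i j, i ≠ j → Z i j ≤ 0) (hs : ∀ i, ∑ j, Z i j = 0)
    (μ : ℝ) (v : Fin n → ℝ) (hv : v ≠ 0) (heig : Z.mulVec v = μ • v) : 0 ≤ μ := by
  have hne : (Finset.univ : Finset (Fin n)).Nonempty := by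
    rcases Function.ne_iff.mp hv with ⟨x, -⟩
    exact ⟨x, Finset.mem_univ x⟩
  obtain ⟨i, -, hi⟩ := Finset.exists_max_image Finset.univ (fun x => |v x|) hne
  have hvi : 0 < |v i| := by
    rcases Function.ne_iff.mp hv with ⟨x, hx⟩
    exact lt_of_lt_of_le (abs_pos.mpr hx) (hi x (Finset.mem_univ x))
  have heq : μ * v i = ∑ j, Z i j * v j := by
    have := congrFun heig i
    simp [Matrix.mulVec, dotProduct] at this
    rw [this]
  have hsplit : (μ - Z i i) * v i = ∑ j ∈ Finset.univ.erase i, Z i j * v j := by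
    have h2 : ∑ j ∈ Finset.univ.erase i, Z i j * v j = (∑ j, Z i j * v j) - Z i i * v i :=
      Finset.sum_erase_eq_sub (Finset.mem_univ i)
    rw [h2, ← heq]; ring
  have hrow : ∑ j ∈ Finset.univ.erase i, Z i j = -Z i i := by
    have h2 : ∑ j ∈ Finset.univ.erase i, Z i j = (∑ j, Z i j) - Z i i :=
      Finset.sum_erase_eq_sub (Finset.mem_univ i)
    rw [h2, hs i]; ring
  have hb : |μ - Z i i| * |v i| ≤ Z i i * |v i| := by
    rw [← abs_mul, hsplit]
    calc |∑ j ∈ Finset.univ.erase i, Z i j * v j|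
        ≤ ∑ j ∈ Finset.univ.erase i, |Z i j * v j| := Finset.abs_sum_le_sum_abs _ _
      _ ≤ ∑ j ∈ Finset.univ.erase i, (-Z i j) * |v i| := by
          refine Finset.sum_le_sum fun j hj => ?_
          rw [abs_mul]
          have hZij : Z i j ≤ 0 := ho i j (Finset.ne_of_mem_erase hj).symm
          rw [abs_of_nonpos hZij]
          exact mul_le_mul_of_nonneg_left (hi j (Finset.mem_univ j)) (by linarith)
      _ = Z i i * |v i| := by
          rw [← Finset.sum_mul]
          rw [show ∑ j ∈ Finset.univ.erase i, -Z i j = -∑ j ∈ Finset.univ.erase i, Z i j by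
            simp, hrow, neg_neg]
  have h1 : |μ - Z i i| ≤ Z i i := le_of_mul_le_mul_right hb hvi
  have := abs_le.mp h1
  linarith [this.1]

lemma stoch_pow {n : ℕ} {P : Matrix (Fin n) (Fin n) ℝ} (hP : IsStochastic P) (k : ℕ) :
    IsStochastic (P ^ k) := by
  induction k with
  | zero =>
    constructor
    · intro x y; simp [Matrix.one_apply]; split <;> norm_num
    · intro x; simp [Matrix.one_apply]
  | succ k ih =>
    rw [pow_succ]
    constructor
    · intro x y
      rw [Matrix.mul_apply]
      exact Finset.sum_nonneg fun z _ => mul_nonneg (ih.1 x z) (hP.1 z y)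
    · intro x
      simp only [Matrix.mul_apply]
      rw [Finset.sum_comm]
      calc ∑ z, ∑ y, (P ^ k) x z * P z y = ∑ z, (P ^ k) x z * ∑ y, P z y := by
            simp [Finset.mul_sum]
        _ = 1 := by simp [hP.2, ih.2 x]

lemma pow_mulVec_fixed {n : ℕ} {P : Matrix (Fin n) (Fin n) ℝ} {w : Fin n → ℝ}
    (hw : P.mulVec w = w) (k : ℕ) : (P ^ k).mulVec w = w := by
  induction k with
  | zero => simp
  | succ k ih => rw [pow_succ, ← Matrix.mulVec_mulVec, hw, ih]

lemma invariant_const {n : ℕ} {P : Matrix (Fin n) (Fin n) ℝ}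
    (hP : IsStochastic P) (hirr : MatIrreducible P) {w : Fin n → ℝ}
    (hw : P.mulVec w = w) (x y : Fin n) : w x = w y := by
  have hne : (Finset.univ : Finset (Fin n)).Nonempty := ⟨x, Finset.mem_univ x⟩
  obtain ⟨x₀, -, hx₀⟩ := Finset.exists_max_image Finset.univ w hne
  suffices h : ∀ z, w z = w x₀ by rw [h x, h y]
  intro z
  rcases eq_or_lt_of_le (hx₀ z (Finset.mem_univ z)) with h | hlt
  · exact h
  · exfalso
    obtain ⟨k, hk⟩ := hirr x₀ z
    have hks := stoch_pow hP k
    have hwk : ∑ j, (P ^ k) x₀ j * w j = w x₀ := by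
      have := congrFun (pow_mulVec_fixed hw k) x₀
      simpa [Matrix.mulVec, dotProduct] using this
    have hstrict : ∑ j, (P ^ k) x₀ j * w j < ∑ j, (P ^ k) x₀ j * w x₀ := by
      refine Finset.sum_lt_sum (fun j _ => mul_le_mul_of_nonneg_left
        (hx₀ j (Finset.mem_univ j)) (hks.1 x₀ j)) ⟨z, Finset.mem_univ z, ?_⟩
      exact mul_lt_mul_of_pos_left hlt hk
    rw [hwk, ← Finset.sum_mul, hks.2 x₀, one_mul] at hstrict
    exact lt_irrefl _ hstrict

lemma eig_abs_le_one {n : ℕ} {P : Matrix (Fin n) (Fin n) ℝ} (hP : IsStochastic P)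
    {μ : ℝ} {w : Fin n → ℝ} (hw : w ≠ 0) (heig : P.mulVec w = μ • w) : |μ| ≤ 1 := by
  have hne : (Finset.univ : Finset (Fin n)).Nonempty := by
    rcases Function.ne_iff.mp hw with ⟨x, -⟩
    exact ⟨x, Finset.mem_univ x⟩
  obtain ⟨i, -, hi⟩ := Finset.exists_max_image Finset.univ (fun x => |w x|) hne
  have hwi : 0 < |w i| := by
    rcases Function.ne_iff.mp hw with ⟨x, hx⟩
    exact lt_of_lt_of_le (abs_pos.mpr hx) (hi x (Finset.mem_univ x))
  have heq : μ * w i = ∑ j, P i j * w j := by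
    have := congrFun heig i
    simp [Matrix.mulVec, dotProduct] at this
    rw [this]
  have hb : |μ| * |w i| ≤ 1 * |w i| := by
    rw [← abs_mul, heq, one_mul]
    calc |∑ j, P i j * w j| ≤ ∑ j, |P i j * w j| := Finset.abs_sum_le_sum_abs _ _
      _ ≤ ∑ j, P i j * |w i| := by
          refine Finset.sum_le_sum fun j _ => ?_
          rw [abs_mul, abs_of_nonneg (hP.1 i j)]
          exact mul_le_mul_of_nonneg_left (hi j (Finset.mem_univ j)) (hP.1 i j)
      _ = |w i| := by rw [← Finset.sum_mul, hP.2 i, one_mul]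
  exact le_of_mul_le_mul_right hb hwi

noncomputable def Smat {n : ℕ} (π : Fin n → ℝ) (P : Matrix (Fin n) (Fin n) ℝ) :
    Matrix (Fin n) (Fin n) ℝ :=
  Matrix.of fun x y => Real.sqrt (π x) * P x y * (Real.sqrt (π y))⁻¹

lemma sqrt_ne_zero' {n : ℕ} {π : Fin n → ℝ} (hπpos : ∀ x, 0 < π x) (x : Fin n) :
    Real.sqrt (π x) ≠ 0 :=
  Real.sqrt_ne_zero'.mpr (hπpos x)

lemma mul_self_sqrt' {n : ℕ} {π : Fin n → ℝ} (hπpos : ∀ x, 0 < π x) (x : Fin n) :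
    Real.sqrt (π x) * Real.sqrt (π x) = π x :=
  Real.mul_self_sqrt (le_of_lt (hπpos x))

lemma Smat_pow {n : ℕ} {π : Fin n → ℝ} {P : Matrix (Fin n) (Fin n) ℝ}
    (hπpos : ∀ x, 0 < π x) (k : ℕ) :
    (Smat π P) ^ k = Matrix.of fun x y => Real.sqrt (π x) * (P ^ k) x y * (Real.sqrt (π y))⁻¹ := by
  induction k with
  | zero =>
    ext x y
    by_cases h : x = y
    · subst h
      simp [Matrix.one_apply, inv_mul_cancel₀ (sqrt_ne_zero' hπpos x),
        mul_inv_cancel₀ (sqrt_ne_zero' hπpos x)]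
    · simp [Matrix.one_apply, h]
  | succ k ih =>
    rw [pow_succ, ih]
    ext x y
    have hrhs : (Matrix.of fun x y => Real.sqrt (π x) * (P ^ (k+1)) x y * (Real.sqrt (π y))⁻¹) x y
        = ∑ z, Real.sqrt (π x) * ((P ^ k) x z * P z y) * (Real.sqrt (π y))⁻¹ := by
      simp [pow_succ, Matrix.mul_apply, Finset.mul_sum, Finset.sum_mul]
    rw [hrhs, Matrix.mul_apply]
    refine Finset.sum_congr rfl fun z _ => ?_
    simp only [Matrix.of_apply, Smat]
    have hz := sqrt_ne_zero' hπpos z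
    have hcz : (Real.sqrt (π z))⁻¹ * Real.sqrt (π z) = 1 := inv_mul_cancel₀ hz
    linear_combination Real.sqrt (π x) * (P ^ k) x z * P z y * (Real.sqrt (π y))⁻¹ * hcz

lemma Smat_herm {n : ℕ} {π : Fin n → ℝ} {P : Matrix (Fin n) (Fin n) ℝ}
    (hπpos : ∀ x, 0 < π x) (hrev : ∀ x y, π x * P x y = π y * P y x) :
    (Smat π P).IsHermitian := by
  rw [Matrix.IsHermitian]
  ext x y
  simp only [Matrix.conjTranspose_apply, Smat, Matrix.of_apply, star_trivial]
  have key : π y * P y x = π x * P x y := (hrev x y).symm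
  have h1 := mul_self_sqrt' hπpos x
  have h2 := mul_self_sqrt' hπpos y
  have hx0 := sqrt_ne_zero' hπpos x
  have hy0 := sqrt_ne_zero' hπpos y
  field_simp
  linear_combination key + P y x * h2 - P x y * h1

lemma Smat_eig_transport {n : ℕ} {π : Fin n → ℝ} {P : Matrix (Fin n) (Fin n) ℝ}
    (hπpos : ∀ x, 0 < π x) {u : Fin n → ℝ} {μ : ℝ}
    (hu : (Smat π P).mulVec u = μ • u) :
    P.mulVec (fun x => (Real.sqrt (π x))⁻¹ * u x) =
      μ • fun x => (Real.sqrt (π x))⁻¹ * u x := by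
  funext x
  have hS := congrFun hu x
  simp only [Matrix.mulVec, dotProduct, Smat, Matrix.of_apply, Pi.smul_apply,
    smul_eq_mul] at hS ⊢
  have : ∑ y, P x y * ((Real.sqrt (π y))⁻¹ * u y)
      = (Real.sqrt (π x))⁻¹ * ∑ y, Real.sqrt (π x) * P x y * (Real.sqrt (π y))⁻¹ * u y := by
    rw [Finset.mul_sum]
    refine Finset.sum_congr rfl fun y _ => ?_
    have hx0 := sqrt_ne_zero' hπpos x
    have hy0 := sqrt_ne_zero' hπpos y
    field_simp
  rw [this, hS]
  ring

lemma transport_ne_zero {n : ℕ} {π : Fin n → ℝ} (hπpos : ∀ x, 0 < π x)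
    {u : Fin n → ℝ} (hu : u ≠ 0) : (fun x => (Real.sqrt (π x))⁻¹ * u x) ≠ 0 := by
  intro h
  apply hu
  funext x
  have := congrFun h x
  simp only [Pi.zero_apply] at this ⊢
  rcases mul_eq_zero.mp this with h' | h'
  · exact absurd h' (inv_ne_zero (sqrt_ne_zero' hπpos x))
  · exact h'

noncomputable def gvec {n : ℕ} (π f : Fin n → ℝ) : Fin n → ℝ :=
  fun x => Real.sqrt (π x) * (f x - ∑ z, π z * f z)

lemma autocov_eq {n : ℕ} {π : Fin n → ℝ} {P : Matrix (Fin n) (Fin n) ℝ}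
    (hπpos : ∀ x, 0 < π x) (f : Fin n → ℝ) (k : ℕ) :
    autocov π P f k = ∑ x, gvec π f x * (((Smat π P) ^ k).mulVec (gvec π f)) x := by
  rw [Smat_pow hπpos]
  unfold autocov gvec
  refine Finset.sum_congr rfl fun x _ => ?_
  simp only [Matrix.mulVec, dotProduct, Matrix.of_apply, Finset.mul_sum]
  refine Finset.sum_congr rfl fun y _ => ?_
  have h1 := mul_self_sqrt' hπpos x
  have hy := sqrt_ne_zero' hπpos y
  field_simp
  linear_combination (-(f x - ∑ z, π z * f z)) * (P ^ k) x y * (f y - ∑ z, π z * f z) * h1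

section spectral
variable {n : ℕ} {A : Matrix (Fin n) (Fin n) ℝ} {u : Fin n → Fin n → ℝ}

lemma herm_symm (hA : A.IsHermitian) (a b : Fin n) : A a b = A b a := by
  conv_lhs => rw [← hA]
  simp [Matrix.conjTranspose_apply]

lemma dot_expand (hcomp : ∀ y : Fin n → ℝ, ∀ x, y x = ∑ i, (∑ z, u i z * y z) * u i x)
    (y w : Fin n → ℝ) :
    ∑ x, y x * w x = ∑ i, (∑ z, u i z * y z) * (∑ z, u i z * w z) := by
  calc ∑ x, y x * w x = ∑ x, y x * ∑ i, (∑ z, u i z * w z) * u i x :=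
        Finset.sum_congr rfl fun x _ => by rw [← hcomp w x]
    _ = ∑ x, ∑ i, (∑ z, u i z * w z) * (y x * u i x) := by
        refine Finset.sum_congr rfl fun x _ => ?_
        rw [Finset.mul_sum]
        exact Finset.sum_congr rfl fun i _ => by ring
    _ = ∑ i, ∑ x, (∑ z, u i z * w z) * (y x * u i x) := Finset.sum_comm
    _ = ∑ i, (∑ z, u i z * y z) * (∑ z, u i z * w z) := by
        refine Finset.sum_congr rfl fun i _ => ?_
        rw [← Finset.mul_sum]
        rw [show ∑ x, y x * u i x = ∑ z, u i z * y z from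
          Finset.sum_congr rfl fun z _ => mul_comm _ _]
        ring

lemma coeff_mulVec (hsym : ∀ a b, A a b = A b a) {i : Fin n} {μ : ℝ}
    (heig : A.mulVec (u i) = μ • u i) (w : Fin n → ℝ) :
    ∑ z, u i z * (A.mulVec w) z = μ * ∑ z, u i z * w z := by
  calc ∑ z, u i z * (A.mulVec w) z = ∑ z, ∑ t, u i z * (A z t * w t) := by
        simp [Matrix.mulVec, dotProduct, Finset.mul_sum]
    _ = ∑ t, (∑ z, A t z * u i z) * w t := by
        rw [Finset.sum_comm]
        refine Finset.sum_congr rfl fun t _ => ?_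
        rw [Finset.sum_mul]
        refine Finset.sum_congr rfl fun z _ => ?_
        rw [hsym z t]; ring
    _ = ∑ t, (μ * u i t) * w t := by
        refine Finset.sum_congr rfl fun t _ => ?_
        have := congrFun heig t
        simp only [Matrix.mulVec, dotProduct, Pi.smul_apply, smul_eq_mul] at this
        rw [this]
    _ = μ * ∑ z, u i z * w z := by
        rw [Finset.mul_sum]
        exact Finset.sum_congr rfl fun t _ => by ring

lemma pow_eig {i : Fin n} {μ : ℝ} (heig : A.mulVec (u i) = μ • u i) (k : ℕ) :
    (A ^ k).mulVec (u i) = (μ ^ k) • u i := by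
  induction k with
  | zero => simp
  | succ k ih =>
    rw [pow_succ, ← Matrix.mulVec_mulVec, heig, Matrix.mulVec_smul, ih, smul_smul, ← pow_succ']

lemma pow_symm (hsym : ∀ a b, A a b = A b a) (k : ℕ) (a b : Fin n) :
    (A ^ k) a b = (A ^ k) b a := by
  have hT : Aᵀ = A := by ext a b; simp [Matrix.transpose_apply, hsym]
  have : (A ^ k)ᵀ = A ^ k := by rw [Matrix.transpose_pow, hT]
  conv_lhs => rw [← this]
  simp [Matrix.transpose_apply]

end spectral

/-- the limiting function -/
noncomputable def hfun (l : ℝ) : ℝ := if l = 1 then 0 else (1 + l) / (1 - l)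
noncomputable def kfun (l : ℝ) : ℝ := if l = 1 then 0 else (1 - l)⁻¹

lemma G_succ (l : ℝ) (N : ℕ) :
    ∑ i ∈ Finset.range (N+1), ∑ j ∈ Finset.range (N+1), l ^ (max i j - min i j)
      = (∑ i ∈ Finset.range N, ∑ j ∈ Finset.range N, l ^ (max i j - min i j))
        + (1 + 2 * ∑ k ∈ Finset.range N, l ^ (k+1)) := by
  have hdiag : ∀ M : ℕ, ∑ i ∈ Finset.range M, l ^ (M - i) = ∑ k ∈ Finset.range M, l ^ (k+1) := by
    intro M
    rw [← Finset.sum_range_reflect (fun k => l ^ (k+1)) M]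
    refine Finset.sum_congr rfl fun i hi => ?_
    have hi' := Finset.mem_range.mp hi
    congr 1
    omega
  rw [Finset.sum_range_succ]
  have h1 : ∀ i ∈ Finset.range N, ∑ j ∈ Finset.range (N+1), l ^ (max i j - min i j)
      = (∑ j ∈ Finset.range N, l ^ (max i j - min i j)) + l ^ (N - i) := by
    intro i hi
    have hi' := Finset.mem_range.mp hi
    rw [Finset.sum_range_succ]
    congr 2
    rw [max_eq_right (le_of_lt hi'), min_eq_left (le_of_lt hi')]
  rw [Finset.sum_congr rfl h1, Finset.sum_add_distrib]
  have h2 : ∑ j ∈ Finset.range (N+1), l ^ (max N j - min N j)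
      = (∑ k ∈ Finset.range N, l ^ (k+1)) + 1 := by
    rw [Finset.sum_range_succ]
    congr 1
    · rw [← hdiag N]
      refine Finset.sum_congr rfl fun j hj => ?_
      have hj' := Finset.mem_range.mp hj
      congr 1
      rw [max_eq_left (le_of_lt hj'), min_eq_right (le_of_lt hj')]
    · simp
  rw [h2, hdiag N]
  ring

lemma G_eq (l : ℝ) (N : ℕ) :
    ∑ i ∈ Finset.range N, ∑ j ∈ Finset.range N, l ^ (max i j - min i j)
      = ∑ m ∈ Finset.range N, (1 + 2 * ∑ k ∈ Finset.range m, l ^ (k+1)) := by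
  induction N with
  | zero => simp
  | succ N ih => rw [G_succ, ih, Finset.sum_range_succ]

lemma alt_sum (N : ℕ) : ∑ k ∈ Finset.range N, (-1 : ℝ) ^ k = if Even N then 0 else 1 := by
  induction N with
  | zero => simp
  | succ N ih =>
    rw [Finset.sum_range_succ, ih]
    by_cases h : Even N
    · simp [h, Nat.even_add_one, Even.neg_one_pow h]
    · have ho : Odd N := Nat.not_even_iff_odd.mp h
      simp [h, Nat.even_add_one, Odd.neg_one_pow ho]

lemma TN_tendsto {l : ℝ} (hl : |l| ≤ 1) (hne : l ≠ 1) :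
    Tendsto (fun N : ℕ => ((N : ℝ))⁻¹ * ∑ i ∈ Finset.range N, ∑ j ∈ Finset.range N,
      l ^ (max i j - min i j)) atTop (nhds ((1 + l) / (1 - l))) := by
  rcases eq_or_lt_of_le (neg_le_of_abs_le hl) with hm1 | hgt
  · -- l = -1
    have hl1 : l = -1 := hm1.symm
    subst hl1
    have hG : ∀ N, ∑ i ∈ Finset.range N, ∑ j ∈ Finset.range N, (-1 : ℝ) ^ (max i j - min i j)
        = if Even N then 0 else 1 := by
      intro N
      induction N with
      | zero => simp
      | succ N ih =>
        rw [G_succ, ih]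
        have : ∑ k ∈ Finset.range N, (-1 : ℝ) ^ (k+1) = -(if Even N then 0 else 1) := by
          rw [← alt_sum N, ← Finset.sum_neg_distrib]
          exact Finset.sum_congr rfl fun k _ => by rw [pow_succ]; ring
        rw [this]
        by_cases h : Even N <;> simp [h, Nat.even_add_one] <;> ring
    have hlim : (1 + (-1 : ℝ)) / (1 - (-1)) = 0 := by norm_num
    rw [hlim]
    apply squeeze_zero_norm (fun N => ?_) tendsto_one_div_atTop_nhds_zero_nat
    · rw [hG]
      by_cases h : Even N
      · rw [if_pos h, mul_zero, norm_zero]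
        positivity
      · rw [if_neg h, mul_one, Real.norm_eq_abs,
          abs_of_nonneg (inv_nonneg.mpr (Nat.cast_nonneg N)), one_div]
  · -- |l| < 1
    have hlt : |l| < 1 := by
      rcases abs_le.mp hl with ⟨h1, h2⟩
      rcases lt_or_eq_of_le h2 with h | h
      · exact abs_lt.mpr ⟨hgt, h⟩
      · exact absurd h hne
    have hgeo : Tendsto (fun m : ℕ => ∑ k ∈ Finset.range m, l ^ k) atTop (nhds (1 - l)⁻¹) :=
      (hasSum_geometric_of_abs_lt_one hlt).tendsto_sum_nat
    have h1l : (1 : ℝ) - l ≠ 0 := sub_ne_zero.mpr (Ne.symm hne)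
    have ha : Tendsto (fun m : ℕ => 1 + 2 * ∑ k ∈ Finset.range m, l ^ (k+1)) atTop
        (nhds ((1 + l) / (1 - l))) := by
      have h2 : ∀ m : ℕ, ∑ k ∈ Finset.range m, l ^ (k+1) = l * ∑ k ∈ Finset.range m, l ^ k := by
        intro m; rw [Finset.mul_sum]; exact Finset.sum_congr rfl fun k _ => by rw [pow_succ]; ring
      simp only [h2]
      have : (1 + l) / (1 - l) = 1 + 2 * (l * (1 - l)⁻¹) := by field_simp; ring
      rw [this]
      exact tendsto_const_nhds.add ((tendsto_const_nhds.mul (tendsto_const_nhds.mul hgeo)))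
    have := ha.cesaro
    refine this.congr fun N => ?_
    rw [G_eq]

lemma orth_ne_zero {n : ℕ} {u : Fin n → Fin n → ℝ}
    (horth : ∀ i j, (∑ x, u i x * u j x) = if i = j then 1 else 0) (i : Fin n) :
    u i ≠ 0 := by
  intro h
  have hii := horth i i
  rw [if_pos rfl] at hii
  simp [h] at hii

lemma quad_nonneg {n : ℕ} {M : Matrix (Fin n) (Fin n) ℝ} (hM : M.IsHermitian)
    (heval : ∀ (μ : ℝ) (v : Fin n → ℝ), v ≠ 0 → M.mulVec v = μ • v → 0 ≤ μ)
    (y : Fin n → ℝ) : 0 ≤ ∑ x, y x * (M.mulVec y) x := by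
  obtain ⟨lam, u, horth, heig, hcomp⟩ := eigen_spec _ hM
  have hy : ∀ x, y x = ∑ i, (∑ z, u i z * y z) * u i x := hcomp y
  rw [dot_expand hcomp y _]
  refine Finset.sum_nonneg fun i _ => ?_
  rw [coeff_mulVec (herm_symm hM) (heig i) y]
  have hμ : 0 ≤ lam i := heval (lam i) (u i) (orth_ne_zero horth i) (heig i)
  nlinarith [sq_nonneg (∑ z, u i z * y z)]

lemma master {n : ℕ} (π : Fin n → ℝ) (P : Matrix (Fin n) (Fin n) ℝ)
    (hπpos : ∀ x, 0 < π x) (hπsum : ∑ x, π x = 1)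
    (hP : IsStochastic P) (hirrP : MatIrreducible P)
    (hrevP : IsReversible π P) (f : Fin n → ℝ) :
    ∃ W : ℝ,
      Tendsto (varN π P f) atTop
        (nhds (2 * W - ∑ x, gvec π f x * gvec π f x)) ∧
      (∀ y : Fin n → ℝ, 2 * (∑ x, gvec π f x * y x) -
          ((∑ x, y x * y x) - ∑ x, y x * ((Smat π P).mulVec y) x) ≤ W) ∧
      (∃ y : Fin n → ℝ, 2 * (∑ x, gvec π f x * y x) -
          ((∑ x, y x * y x) - ∑ x, y x * ((Smat π P).mulVec y) x) = W) := by
  have hS := Smat_herm hπpos hrevP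
  obtain ⟨lam, u, horth, heig, hcomp⟩ := eigen_spec _ hS
  have hsym : ∀ a b, Smat π P a b = Smat π P b a := herm_symm hS
  set c : Fin n → ℝ := fun i => ∑ z, u i z * gvec π f z with hc
  have hlam_le : ∀ i, |lam i| ≤ 1 := fun i =>
    eig_abs_le_one hP (transport_ne_zero hπpos (orth_ne_zero horth i))
      (Smat_eig_transport hπpos (heig i))
  have hlam1 : ∀ i, lam i = 1 → c i = 0 := by
    intro i h1
    have heig1 : (Smat π P).mulVec (u i) = (1:ℝ) • u i := by rw [heig i, h1]
    have hPw := Smat_eig_transport hπpos heig1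
    rw [one_smul] at hPw
    have hconst := fun z t => invariant_const hP hirrP hPw z t
    have hval : ∀ z, u i z = Real.sqrt (π z) * ((Real.sqrt (π i))⁻¹ * u i i) := by
      intro z
      have hzt : (Real.sqrt (π z))⁻¹ * u i z = (Real.sqrt (π i))⁻¹ * u i i := hconst z i
      calc u i z = Real.sqrt (π z) * ((Real.sqrt (π z))⁻¹ * u i z) := by
            rw [← mul_assoc, mul_inv_cancel₀ (sqrt_ne_zero' hπpos z), one_mul]
        _ = _ := by rw [hzt]
    have hcent : ∑ z, π z * (f z - ∑ t, π t * f t) = 0 := by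
      rw [show ∑ z, π z * (f z - ∑ t, π t * f t)
          = (∑ z, π z * f z) - (∑ z, π z) * (∑ t, π t * f t) from by
        rw [Finset.sum_mul, ← Finset.sum_sub_distrib]
        exact Finset.sum_congr rfl fun z _ => by ring]
      rw [hπsum]; ring
    rw [hc]
    calc ∑ z, u i z * gvec π f z
        = ∑ z, ((Real.sqrt (π i))⁻¹ * u i i) * (π z * (f z - ∑ t, π t * f t)) := by
          refine Finset.sum_congr rfl fun z _ => ?_
          rw [hval z]
          unfold gvec
          linear_combination ((Real.sqrt (π i))⁻¹ * u i i) * (f z - ∑ t, π t * f t) *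
            mul_self_sqrt' hπpos z
      _ = ((Real.sqrt (π i))⁻¹ * u i i) * ∑ z, π z * (f z - ∑ t, π t * f t) := by
          rw [Finset.mul_sum]
      _ = 0 := by rw [hcent]; ring
  have hac : ∀ k, autocov π P f k = ∑ i, (c i * c i) * lam i ^ k := by
    intro k
    rw [autocov_eq hπpos f k, dot_expand hcomp (gvec π f) (((Smat π P) ^ k).mulVec (gvec π f))]
    refine Finset.sum_congr rfl fun i _ => ?_
    rw [coeff_mulVec (pow_symm hsym k) (pow_eig (heig i) k) (gvec π f)]
    rw [hc]; ring
  have hvar : ∀ N : ℕ, varN π P f N = ∑ i, (c i * c i) *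
      (((N:ℝ))⁻¹ * ∑ a ∈ Finset.range N, ∑ b ∈ Finset.range N,
        lam i ^ (max a b - min a b)) := by
    intro N
    unfold varN
    rw [show (∑ a ∈ Finset.range N, ∑ b ∈ Finset.range N, autocov π P f (max a b - min a b))
        = ∑ i, ∑ a ∈ Finset.range N, ∑ b ∈ Finset.range N,
            (c i * c i) * lam i ^ (max a b - min a b) from by
      rw [show (∑ a ∈ Finset.range N, ∑ b ∈ Finset.range N, autocov π P f (max a b - min a b))
          = ∑ a ∈ Finset.range N, ∑ i, ∑ b ∈ Finset.range N,
              (c i * c i) * lam i ^ (max a b - min a b) from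
        Finset.sum_congr rfl fun a _ => by
          rw [show (∑ b ∈ Finset.range N, autocov π P f (max a b - min a b))
              = ∑ b ∈ Finset.range N, ∑ i, (c i * c i) * lam i ^ (max a b - min a b) from
            Finset.sum_congr rfl fun b _ => hac _]
          exact Finset.sum_comm]
      exact Finset.sum_comm]
    rw [Finset.mul_sum]
    refine Finset.sum_congr rfl fun i _ => ?_
    have hpull : ∀ (K : ℝ) (F : ℕ → ℕ → ℝ),
        (∑ a ∈ Finset.range N, ∑ b ∈ Finset.range N, K * F a b)
          = K * ∑ a ∈ Finset.range N, ∑ b ∈ Finset.range N, F a b := by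
      intro K F
      rw [Finset.mul_sum]
      exact Finset.sum_congr rfl fun a _ => (Finset.mul_sum _ _ _).symm
    rw [hpull (c i * c i) (fun a b => lam i ^ (max a b - min a b))]
    ring
  have hlim : Tendsto (varN π P f) atTop (nhds (∑ i, (c i * c i) * hfun (lam i))) := by
    have hterm : ∀ i : Fin n, Tendsto (fun N : ℕ => (c i * c i) *
        (((N:ℝ))⁻¹ * ∑ a ∈ Finset.range N, ∑ b ∈ Finset.range N,
          lam i ^ (max a b - min a b))) atTop (nhds ((c i * c i) * hfun (lam i))) := by
      intro i
      by_cases h1 : lam i = 1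
      · have hc0 : c i = 0 := hlam1 i h1
        rw [hc0]
        simpa using tendsto_const_nhds
      · have := (TN_tendsto (hlam_le i) h1).const_mul (c i * c i)
        rw [show hfun (lam i) = (1 + lam i) / (1 - lam i) from if_neg h1]
        exact this
    have := tendsto_finset_sum Finset.univ (fun i _ => hterm i)
    exact this.congr fun N => (hvar N).symm
  refine ⟨∑ i, (c i * c i) * kfun (lam i), ?_, ?_, ?_⟩
  · have hgg : ∑ x, gvec π f x * gvec π f x = ∑ i, c i * c i := by
      rw [dot_expand hcomp (gvec π f) (gvec π f)]
    have hval : ∑ i, (c i * c i) * hfun (lam i)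
        = 2 * (∑ i, (c i * c i) * kfun (lam i)) - ∑ i, c i * c i := by
      rw [Finset.mul_sum, ← Finset.sum_sub_distrib]
      refine Finset.sum_congr rfl fun i _ => ?_
      by_cases h1 : lam i = 1
      · simp [hfun, kfun, h1, hlam1 i h1]
      · have hne : (1:ℝ) - lam i ≠ 0 := sub_ne_zero.mpr (Ne.symm h1)
        rw [show hfun (lam i) = (1 + lam i) / (1 - lam i) from if_neg h1,
          show kfun (lam i) = (1 - lam i)⁻¹ from if_neg h1]
        field_simp
        ring
    rw [hgg, ← hval]
    exact hlim
  · intro y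
    have e1 : ∑ x, gvec π f x * y x = ∑ i, c i * (∑ z, u i z * y z) :=
      dot_expand hcomp (gvec π f) y
    have e2 : ∑ x, y x * y x = ∑ i, (∑ z, u i z * y z) * (∑ z, u i z * y z) :=
      dot_expand hcomp y y
    have e3 : ∑ x, y x * ((Smat π P).mulVec y) x
        = ∑ i, lam i * ((∑ z, u i z * y z) * (∑ z, u i z * y z)) := by
      rw [dot_expand hcomp y ((Smat π P).mulVec y)]
      refine Finset.sum_congr rfl fun i _ => ?_
      rw [coeff_mulVec hsym (heig i) y]
      ring
    rw [e1, e2, e3]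
    rw [show 2 * ∑ i, c i * (∑ z, u i z * y z)
        - ((∑ i, (∑ z, u i z * y z) * (∑ z, u i z * y z))
          - ∑ i, lam i * ((∑ z, u i z * y z) * (∑ z, u i z * y z)))
        = ∑ i, (2 * (c i * (∑ z, u i z * y z))
            - (1 - lam i) * ((∑ z, u i z * y z) * (∑ z, u i z * y z))) from by
      rw [Finset.mul_sum, ← Finset.sum_sub_distrib, ← Finset.sum_sub_distrib]
      exact Finset.sum_congr rfl fun i _ => by ring]
    refine Finset.sum_le_sum fun i _ => ?_
    by_cases h1 : lam i = 1
    · rw [show kfun (lam i) = 0 from by rw [h1]; simp [kfun], hlam1 i h1, h1]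
      simp
    · have hlt : lam i < 1 := lt_of_le_of_ne (le_of_abs_le (hlam_le i)) h1
      have ha : (0:ℝ) < 1 - lam i := by linarith
      rw [show kfun (lam i) = (1 - lam i)⁻¹ from if_neg h1,
        show (c i * c i) * (1 - lam i)⁻¹ = (c i * c i) / (1 - lam i) from
          (div_eq_mul_inv _ _).symm, le_div_iff₀ ha]
      nlinarith [sq_nonneg ((1 - lam i) * (∑ z, u i z * y z) - c i)]
  · refine ⟨fun x => ∑ i, (c i * kfun (lam i)) * u i x, ?_⟩
    have hd : ∀ j, (∑ z, u j z * ∑ i, (c i * kfun (lam i)) * u i z) = c j * kfun (lam j) := by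
      intro j
      calc ∑ z, u j z * ∑ i, (c i * kfun (lam i)) * u i z
          = ∑ z, ∑ i, (c i * kfun (lam i)) * (u j z * u i z) := by
            refine Finset.sum_congr rfl fun z _ => ?_
            rw [Finset.mul_sum]
            exact Finset.sum_congr rfl fun i _ => by ring
        _ = ∑ i, (c i * kfun (lam i)) * ∑ z, u j z * u i z := by
            rw [Finset.sum_comm]
            exact Finset.sum_congr rfl fun i _ => by rw [Finset.mul_sum]
        _ = ∑ i, (c i * kfun (lam i)) * (if j = i then 1 else 0) := by
            refine Finset.sum_congr rfl fun i _ => ?_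
            rw [horth j i]
        _ = c j * kfun (lam j) := by
            simp only [mul_ite, mul_one, mul_zero]
            rw [Finset.sum_ite_eq]
            simp
    set y : Fin n → ℝ := fun x => ∑ i, (c i * kfun (lam i)) * u i x with hy
    have e1 : ∑ x, gvec π f x * y x = ∑ i, c i * (c i * kfun (lam i)) := by
      rw [dot_expand hcomp (gvec π f) y]
      refine Finset.sum_congr rfl fun i _ => ?_
      rw [hy, hd i]
    have e2 : ∑ x, y x * y x = ∑ i, (c i * kfun (lam i)) * (c i * kfun (lam i)) := by
      rw [dot_expand hcomp y y]
      refine Finset.sum_congr rfl fun i _ => ?_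
      rw [hy, hd i]
    have e3 : ∑ x, y x * ((Smat π P).mulVec y) x
        = ∑ i, lam i * ((c i * kfun (lam i)) * (c i * kfun (lam i))) := by
      rw [dot_expand hcomp y ((Smat π P).mulVec y)]
      refine Finset.sum_congr rfl fun i _ => ?_
      rw [coeff_mulVec hsym (heig i) y, hy, hd i]
      ring
    rw [e1, e2, e3]
    rw [show 2 * ∑ i, c i * (c i * kfun (lam i))
        - ((∑ i, (c i * kfun (lam i)) * (c i * kfun (lam i)))
          - ∑ i, lam i * ((c i * kfun (lam i)) * (c i * kfun (lam i))))
        = ∑ i, (2 * (c i * (c i * kfun (lam i)))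
            - (1 - lam i) * ((c i * kfun (lam i)) * (c i * kfun (lam i)))) from by
      rw [Finset.mul_sum, ← Finset.sum_sub_distrib, ← Finset.sum_sub_distrib]
      exact Finset.sum_congr rfl fun i _ => by ring]
    refine Finset.sum_congr rfl fun i _ => ?_
    by_cases h1 : lam i = 1
    · rw [show kfun (lam i) = 0 from by rw [h1]; simp [kfun], hlam1 i h1]
      ring
    · have hne : (1:ℝ) - lam i ≠ 0 := sub_ne_zero.mpr (Ne.symm h1)
      rw [show kfun (lam i) = (1 - lam i)⁻¹ from if_neg h1]
      field_simp
      ring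

theorem stmt18 {n : ℕ} (π : Fin n → ℝ) (P Q : Matrix (Fin n) (Fin n) ℝ)
    (hπpos : ∀ x, 0 < π x) (hπsum : ∑ x, π x = 1)
    (hP : IsStochastic P) (hQ : IsStochastic Q)
    (hirrP : MatIrreducible P) (hirrQ : MatIrreducible Q)
    (hrevP : IsReversible π P) (hrevQ : IsReversible π Q) :
    (∀ Z : Matrix (Fin n) (Fin n) ℝ,
      (∀ i, 0 ≤ Z i i) → (∀ i j, i ≠ j → Z i j ≤ 0) → (∀ i, ∑ j, Z i j = 0) →
      ∀ (μ : ℝ) (v : Fin n → ℝ), v ≠ 0 → Z.mulVec v = μ • v → 0 ≤ μ) ∧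
    ((∀ x y, x ≠ y → Q x y ≤ P x y) → EffDom π P Q) := by
  constructor
  · exact fun Z hd ho hs μ v hv he => part1 Z hd ho hs μ v hv he
  · intro hdom f vP vQ hvP hvQ
    -- the difference matrix
    set Z : Matrix (Fin n) (Fin n) ℝ := Q - P with hZ
    have hZo : ∀ i j, i ≠ j → Z i j ≤ 0 := fun i j hij => by
      simp only [hZ, Matrix.sub_apply]
      exact sub_nonpos.mpr (hdom i j hij)
    have hZs : ∀ i, ∑ j, Z i j = 0 := fun i => by
      simp only [hZ, Matrix.sub_apply, Finset.sum_sub_distrib, hP.2 i, hQ.2 i, sub_self]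
    have hZd : ∀ i, 0 ≤ Z i i := by
      intro i
      have hsum := hZs i
      rw [← Finset.sum_erase_add _ _ (Finset.mem_univ i)] at hsum
      have hterm : ∑ j ∈ Finset.univ.erase i, Z i j ≤ 0 :=
        Finset.sum_nonpos fun j hj => hZo i j (Finset.ne_of_mem_erase hj).symm
      linarith
    have hZrev : ∀ x y, π x * Z x y = π y * Z y x := fun x y => by
      simp only [hZ, Matrix.sub_apply, mul_sub, hrevP x y, hrevQ x y]
    have hMherm : (Smat π Z).IsHermitian := Smat_herm hπpos hZrev
    have hMev : ∀ (μ : ℝ) (v : Fin n → ℝ), v ≠ 0 → (Smat π Z).mulVec v = μ • v → 0 ≤ μ := by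
      intro μ v hv he
      exact part1 Z hZd hZo hZs μ _ (transport_ne_zero hπpos hv)
        (Smat_eig_transport hπpos he)
    obtain ⟨WP, hPlim, hPub, y0, hy0⟩ := master π P hπpos hπsum hP hirrP hrevP f
    obtain ⟨WQ, hQlim, hQub, -⟩ := master π Q hπpos hπsum hQ hirrQ hrevQ f
    have hvP' : vP = 2 * WP - ∑ x, gvec π f x * gvec π f x := tendsto_nhds_unique hvP hPlim
    have hvQ' : vQ = 2 * WQ - ∑ x, gvec π f x * gvec π f x := tendsto_nhds_unique hvQ hQlim
    have hMq : ∑ x, y0 x * ((Smat π Z).mulVec y0) x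
        = (∑ x, y0 x * ((Smat π Q).mulVec y0) x) - ∑ x, y0 x * ((Smat π P).mulVec y0) x := by
      rw [← Finset.sum_sub_distrib]
      refine Finset.sum_congr rfl fun x _ => ?_
      simp only [Matrix.mulVec, dotProduct, Smat, Matrix.of_apply, hZ, Matrix.sub_apply]
      rw [← mul_sub, ← Finset.sum_sub_distrib]
      congr 1
      refine Finset.sum_congr rfl fun t _ => ?_
      ring
    have h0 : 0 ≤ ∑ x, y0 x * ((Smat π Z).mulVec y0) x := quad_nonneg hMherm hMev y0
    have hW : WP ≤ WQ := by
      have hFQ := hQub y0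
      linarith [hy0, hFQ, hMq, h0]
    linarith [hvP', hvQ', hW]
end
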